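/- arXiv:1307.3583 — 2 statements merged into one kernel-verified Lean document; each statement's English description precedes it below -/
import Mathlib

section
/- For every real x, the improper integral (1/π)·∫₀^∞ cos(t³/3 + x·t) dt converges (as the limit of ∫₀^R as R → ∞); the resulting function Ai : ℝ → ℝ (the Airy function of the first kind) is twice differentiable and satisfies the Airy differential equation Ai''(x) = x·Ai(x) for all x ∈ ℝ. -/
open MeasureTheory Filter Set intervalIntegral Topology
open scoped Interval

/-- The Airy function of the first kind, defined as
`Ai(x) = (1/π) · lim_{R→∞} ∫₀^R cos(t³/3 + x·t) dt`. -/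
noncomputable def Ai (x : ℝ) : ℝ :=
  (1 / Real.pi) *
    limUnder Filter.atTop (fun R : ℝ => ∫ t in (0:ℝ)..R, Real.cos (t ^ 3 / 3 + x * t))

noncomputable def Acal (R x : ℝ) : ℝ := ∫ t in (0:ℝ)..R, Real.cos (t ^ 3 / 3 + x * t)
noncomputable def Dcal (R x : ℝ) : ℝ := ∫ t in (0:ℝ)..R, t * Real.sin (t ^ 3 / 3 + x * t)

lemma hasDerivAt_phi (x t : ℝ) : HasDerivAt (fun t : ℝ => t ^ 3 / 3 + x * t) (t ^ 2 + x) t := by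
  have h := ((hasDerivAt_pow 3 t).div_const 3).add ((hasDerivAt_id t).const_mul x)
  refine h.congr_deriv ?_
  norm_num

lemma cont_cos : Continuous (fun p : ℝ × ℝ => Real.cos (p.2 ^ 3 / 3 + p.1 * p.2)) := by
  fun_prop

lemma cont_tsin : Continuous (fun p : ℝ × ℝ => p.2 * Real.sin (p.2 ^ 3 / 3 + p.1 * p.2)) := by
  fun_prop

lemma Acal_cont (R : ℝ) : Continuous (fun x => Acal R x) := by
  exact continuous_parametric_intervalIntegral_of_continuous'
    (f := fun x t => Real.cos (t ^ 3 / 3 + x * t)) cont_cos 0 R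

lemma Dcal_cont (R : ℝ) : Continuous (fun x => Dcal R x) := by
  exact continuous_parametric_intervalIntegral_of_continuous'
    (f := fun x t => t * Real.sin (t ^ 3 / 3 + x * t)) cont_tsin 0 R

lemma hasDerivAt_Acal (R x : ℝ) : HasDerivAt (fun x => Acal R x) (-Dcal R x) x := by
  have key := intervalIntegral.hasDerivAt_integral_of_dominated_loc_of_deriv_le
    (F := fun x t => Real.cos (t ^ 3 / 3 + x * t))
    (F' := fun x t => -(t * Real.sin (t ^ 3 / 3 + x * t)))
    (bound := fun t => |t|) (a := 0) (b := R) (x₀ := x) (μ := volume)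
    (Metric.ball_mem_nhds x one_pos)
    (Eventually.of_forall fun y => (by fun_prop : Continuous
      (fun t => Real.cos (t ^ 3 / 3 + y * t))).aestronglyMeasurable)
    ((by fun_prop : Continuous (fun t => Real.cos (t ^ 3 / 3 + x * t))).intervalIntegrable 0 R)
    ((by fun_prop : Continuous (fun t => -(t * Real.sin (t ^ 3 / 3 + x * t)))).aestronglyMeasurable)
    (ae_of_all _ fun t _ y _ => by
      rw [norm_neg, norm_mul]
      calc ‖t‖ * ‖Real.sin (t ^ 3 / 3 + y * t)‖ ≤ ‖t‖ * 1 := by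
            gcongr; exact Real.abs_sin_le_one _
        _ = |t| := by simp)
    (continuous_abs.intervalIntegrable 0 R)
    (ae_of_all _ fun t _ y _ => by
      have h := ((hasDerivAt_id y).mul_const t).const_add (t ^ 3 / 3)
      have h2 := (Real.hasDerivAt_cos (t ^ 3 / 3 + y * t)).comp y
        (by simpa using h : HasDerivAt (fun y : ℝ => t ^ 3 / 3 + y * t) t y)
      refine h2.congr_deriv ?_
      ring)
  have h2 := key.2
  rwa [intervalIntegral.integral_neg] at h2

lemma integral_phideriv_cos (R x : ℝ) :
    ∫ t in (0:ℝ)..R, (t ^ 2 + x) * Real.cos (t ^ 3 / 3 + x * t)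
      = Real.sin (R ^ 3 / 3 + x * R) := by
  have key : ∀ t ∈ uIcc (0:ℝ) R, HasDerivAt (fun t : ℝ => Real.sin (t ^ 3 / 3 + x * t))
      ((t ^ 2 + x) * Real.cos (t ^ 3 / 3 + x * t)) t := by
    intro t _
    have h := (Real.hasDerivAt_sin (t ^ 3 / 3 + x * t)).comp t (hasDerivAt_phi x t)
    refine h.congr_deriv ?_; ring
  have := intervalIntegral.integral_eq_sub_of_hasDerivAt key
    ((by fun_prop : Continuous fun t : ℝ => (t ^ 2 + x) * Real.cos (t ^ 3 / 3 + x * t)).intervalIntegrable 0 R)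
  simpa using this

lemma hasDerivAt_Dcal (R x : ℝ) :
    HasDerivAt (fun x => Dcal R x) (Real.sin (R ^ 3 / 3 + x * R) - x * Acal R x) x := by
  have key := intervalIntegral.hasDerivAt_integral_of_dominated_loc_of_deriv_le
    (F := fun x t => t * Real.sin (t ^ 3 / 3 + x * t))
    (F' := fun x t => t ^ 2 * Real.cos (t ^ 3 / 3 + x * t))
    (bound := fun t => t ^ 2) (a := 0) (b := R) (x₀ := x) (μ := volume)
    (Metric.ball_mem_nhds x one_pos)
    (Eventually.of_forall fun y => (by fun_prop : Continuous
      (fun t => t * Real.sin (t ^ 3 / 3 + y * t))).aestronglyMeasurable)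
    ((by fun_prop : Continuous (fun t => t * Real.sin (t ^ 3 / 3 + x * t))).intervalIntegrable 0 R)
    ((by fun_prop : Continuous (fun t => t ^ 2 * Real.cos (t ^ 3 / 3 + x * t))).aestronglyMeasurable)
    (ae_of_all _ fun t _ y _ => by
      rw [norm_mul]
      calc ‖t ^ 2‖ * ‖Real.cos (t ^ 3 / 3 + y * t)‖ ≤ ‖t ^ 2‖ * 1 := by
            gcongr; exact Real.abs_cos_le_one _
        _ = t ^ 2 := by simp [abs_of_nonneg (sq_nonneg t)])
    ((by fun_prop : Continuous fun t : ℝ => t ^ 2).intervalIntegrable 0 R)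
    (ae_of_all _ fun t _ y _ => by
      have h := ((hasDerivAt_id y).mul_const t).const_add (t ^ 3 / 3)
      have h2 := ((Real.hasDerivAt_sin (t ^ 3 / 3 + y * t)).comp y
        (by simpa using h : HasDerivAt (fun y : ℝ => t ^ 3 / 3 + y * t) t y)).const_mul t
      refine h2.congr_deriv ?_
      ring)
  have h2 := key.2
  have heq : (∫ t in (0:ℝ)..R, t ^ 2 * Real.cos (t ^ 3 / 3 + x * t))
      = Real.sin (R ^ 3 / 3 + x * R) - x * Acal R x := by
    have hsub : ∀ t : ℝ, t ^ 2 * Real.cos (t ^ 3 / 3 + x * t)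
        = (t ^ 2 + x) * Real.cos (t ^ 3 / 3 + x * t) - x * Real.cos (t ^ 3 / 3 + x * t) := by
      intro t; ring
    rw [intervalIntegral.integral_congr (g := fun t => (t ^ 2 + x) * Real.cos (t ^ 3 / 3 + x * t)
        - x * Real.cos (t ^ 3 / 3 + x * t)) (fun t _ => hsub t),
      intervalIntegral.integral_sub
        ((by fun_prop : Continuous fun t : ℝ => (t ^ 2 + x) * Real.cos (t ^ 3 / 3 + x * t)).intervalIntegrable 0 R)
        ((by fun_prop : Continuous fun t : ℝ => x * Real.cos (t ^ 3 / 3 + x * t)).intervalIntegrable 0 R),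
      integral_phideriv_cos, intervalIntegral.integral_const_mul]
    rfl
  rwa [heq] at h2
-- IBP for cos
lemma ibp_cos (x T R : ℝ) (hT : 1 ≤ T) (hTR : T ≤ R)
    (hden : ∀ t : ℝ, T ≤ t → t ^ 2 / 2 ≤ t ^ 2 + x) :
    ∫ t in T..R, Real.cos (t ^ 3 / 3 + x * t)
      = Real.sin (R ^ 3 / 3 + x * R) / (R ^ 2 + x)
        - Real.sin (T ^ 3 / 3 + x * T) / (T ^ 2 + x)
        + ∫ t in T..R, 2 * t * Real.sin (t ^ 3 / 3 + x * t) / (t ^ 2 + x) ^ 2 := by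
  have hpos : ∀ t : ℝ, T ≤ t → 0 < t ^ 2 + x := by
    intro t ht
    have h1 : (1:ℝ) ≤ t := hT.trans ht
    have := hden t ht
    nlinarith
  have huIcc : uIcc T R = Icc T R := uIcc_of_le hTR
  have hg_cont : ContinuousOn (fun t : ℝ => 2 * t * Real.sin (t ^ 3 / 3 + x * t) / (t ^ 2 + x) ^ 2)
      (uIcc T R) := by
    apply ContinuousOn.div (by fun_prop) (by fun_prop)
    intro t ht
    rw [huIcc] at ht
    exact pow_ne_zero _ (hpos t ht.1).ne'
  have key : ∀ t ∈ uIcc T R, HasDerivAt (fun t : ℝ => Real.sin (t ^ 3 / 3 + x * t) / (t ^ 2 + x))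
      (Real.cos (t ^ 3 / 3 + x * t) - 2 * t * Real.sin (t ^ 3 / 3 + x * t) / (t ^ 2 + x) ^ 2) t := by
    intro t ht
    rw [huIcc] at ht
    have hne : t ^ 2 + x ≠ 0 := (hpos t ht.1).ne'
    have h1 := (Real.hasDerivAt_sin (t ^ 3 / 3 + x * t)).comp t (hasDerivAt_phi x t)
    have h2 := (hasDerivAt_pow 2 t).add_const x
    have h := h1.div h2 hne
    refine h.congr_deriv ?_
    field_simp
    simp only [Function.comp_apply, Pi.mul_apply, id_eq]
    ring
  have hint : IntervalIntegrable (fun t : ℝ => Real.cos (t ^ 3 / 3 + x * t)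
      - 2 * t * Real.sin (t ^ 3 / 3 + x * t) / (t ^ 2 + x) ^ 2) volume T R := by
    apply ContinuousOn.intervalIntegrable
    exact (Continuous.continuousOn (by fun_prop)).sub hg_cont
  have heq := intervalIntegral.integral_eq_sub_of_hasDerivAt key hint
  rw [intervalIntegral.integral_sub
    ((by fun_prop : Continuous fun t : ℝ => Real.cos (t ^ 3 / 3 + x * t)).intervalIntegrable T R)
    (hg_cont.intervalIntegrable)] at heq
  linarith [heq]

-- IBP for t sin
lemma ibp_tsin (x T R : ℝ) (hT : 1 ≤ T) (hTR : T ≤ R)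
    (hden : ∀ t : ℝ, T ≤ t → t ^ 2 / 2 ≤ t ^ 2 + x) :
    ∫ t in T..R, t * Real.sin (t ^ 3 / 3 + x * t)
      = -(R * Real.cos (R ^ 3 / 3 + x * R) / (R ^ 2 + x))
        + T * Real.cos (T ^ 3 / 3 + x * T) / (T ^ 2 + x)
        + ∫ t in T..R, (x - t ^ 2) / (t ^ 2 + x) ^ 2 * Real.cos (t ^ 3 / 3 + x * t) := by
  have hpos : ∀ t : ℝ, T ≤ t → 0 < t ^ 2 + x := by
    intro t ht
    have h1 : (1:ℝ) ≤ t := hT.trans ht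
    have := hden t ht
    nlinarith
  have huIcc : uIcc T R = Icc T R := uIcc_of_le hTR
  have hh_cont : ContinuousOn (fun t : ℝ => (x - t ^ 2) / (t ^ 2 + x) ^ 2 * Real.cos (t ^ 3 / 3 + x * t))
      (uIcc T R) := by
    apply ContinuousOn.mul _ (by fun_prop)
    apply ContinuousOn.div (by fun_prop) (by fun_prop)
    intro t ht
    rw [huIcc] at ht
    exact pow_ne_zero _ (hpos t ht.1).ne'
  have key : ∀ t ∈ uIcc T R, HasDerivAt (fun t : ℝ => -(t * Real.cos (t ^ 3 / 3 + x * t) / (t ^ 2 + x)))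
      (t * Real.sin (t ^ 3 / 3 + x * t)
        - (x - t ^ 2) / (t ^ 2 + x) ^ 2 * Real.cos (t ^ 3 / 3 + x * t)) t := by
    intro t ht
    rw [huIcc] at ht
    have hne : t ^ 2 + x ≠ 0 := (hpos t ht.1).ne'
    have h1 := (hasDerivAt_id t).mul ((Real.hasDerivAt_cos (t ^ 3 / 3 + x * t)).comp t (hasDerivAt_phi x t))
    have h2 := (hasDerivAt_pow 2 t).add_const x
    have h := (h1.div h2 hne).neg
    refine h.congr_deriv ?_
    field_simp
    simp only [Function.comp_apply, Pi.mul_apply, id_eq]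
    ring
  have hint : IntervalIntegrable (fun t : ℝ => t * Real.sin (t ^ 3 / 3 + x * t)
      - (x - t ^ 2) / (t ^ 2 + x) ^ 2 * Real.cos (t ^ 3 / 3 + x * t)) volume T R := by
    apply ContinuousOn.intervalIntegrable
    exact (Continuous.continuousOn (by fun_prop)).sub hh_cont
  have heq := intervalIntegral.integral_eq_sub_of_hasDerivAt key hint
  rw [intervalIntegral.integral_sub
    ((by fun_prop : Continuous fun t : ℝ => t * Real.sin (t ^ 3 / 3 + x * t)).intervalIntegrable T R)
    (hh_cont.intervalIntegrable)] at heq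
  linarith [heq]
lemma int_inv_cube (T R : ℝ) (hT : 0 < T) (hTR : T ≤ R) :
    ∫ t in T..R, 8 / t ^ 3 = 4 / T ^ 2 - 4 / R ^ 2 := by
  have key : ∀ t ∈ uIcc T R, HasDerivAt (fun t : ℝ => -4 / t ^ 2) (8 / t ^ 3) t := by
    intro t ht
    rw [uIcc_of_le hTR] at ht
    have htpos : 0 < t := hT.trans_le ht.1
    have h := ((hasDerivAt_pow 2 t).inv (pow_ne_zero 2 htpos.ne')).const_mul (-4 : ℝ)
    have hfun : (fun t : ℝ => -4 / t ^ 2) = fun y : ℝ => -4 * (y ^ 2)⁻¹ := by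
      funext y; rw [div_eq_mul_inv]
    rw [hfun]
    refine h.congr_deriv ?_
    norm_num
    field_simp
    ring
  have hint : IntervalIntegrable (fun t : ℝ => 8 / t ^ 3) volume T R := by
    apply ContinuousOn.intervalIntegrable
    apply ContinuousOn.div continuousOn_const (by fun_prop)
    intro t ht
    rw [uIcc_of_le hTR] at ht
    exact pow_ne_zero _ (hT.trans_le ht.1).ne'
  have := intervalIntegral.integral_eq_sub_of_hasDerivAt key hint
  rw [this]; ring

lemma int_inv_sq (T R : ℝ) (hT : 0 < T) (hTR : T ≤ R) :
    ∫ t in T..R, 8 / t ^ 2 = 8 / T - 8 / R := by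
  have key : ∀ t ∈ uIcc T R, HasDerivAt (fun t : ℝ => -8 / t) (8 / t ^ 2) t := by
    intro t ht
    rw [uIcc_of_le hTR] at ht
    have htpos : 0 < t := hT.trans_le ht.1
    have h := ((hasDerivAt_id t).inv htpos.ne').const_mul (-8 : ℝ)
    have hfun : (fun t : ℝ => -8 / t) = fun y : ℝ => -8 * (id y)⁻¹ := by
      funext y; rw [div_eq_mul_inv]; rfl
    rw [hfun]
    refine h.congr_deriv ?_
    field_simp
    simp only [id_eq]; exact div_self (pow_ne_zero 2 htpos.ne')
  have hint : IntervalIntegrable (fun t : ℝ => 8 / t ^ 2) volume T R := by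
    apply ContinuousOn.intervalIntegrable
    apply ContinuousOn.div continuousOn_const (by fun_prop)
    intro t ht
    rw [uIcc_of_le hTR] at ht
    exact pow_ne_zero _ (hT.trans_le ht.1).ne'
  have := intervalIntegral.integral_eq_sub_of_hasDerivAt key hint
  rw [this]; ring

lemma integrableOn_inv_cube (T : ℝ) (hT : 0 < T) :
    IntegrableOn (fun t : ℝ => 8 / t ^ 3) (Ioi T) := by
  have h := (integrableOn_Ioi_rpow_of_lt (show (-3:ℝ) < -1 by norm_num) hT).const_mul (8:ℝ)
  apply IntegrableOn.congr_fun h _ measurableSet_Ioi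
  intro t ht
  have htpos : 0 < t := hT.trans ht
  show 8 * t ^ (-3 : ℝ) = 8 / t ^ 3
  rw [show (-3 : ℝ) = -(3:ℕ) by norm_num, Real.rpow_neg htpos.le, Real.rpow_natCast,
    div_eq_mul_inv]

lemma integrableOn_inv_sq' (T : ℝ) (hT : 0 < T) :
    IntegrableOn (fun t : ℝ => 8 / t ^ 2) (Ioi T) := by
  have h := (integrableOn_Ioi_rpow_of_lt (show (-2:ℝ) < -1 by norm_num) hT).const_mul (8:ℝ)
  apply IntegrableOn.congr_fun h _ measurableSet_Ioi
  intro t ht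
  have htpos : 0 < t := hT.trans ht
  show 8 * t ^ (-2 : ℝ) = 8 / t ^ 2
  rw [show (-2 : ℝ) = -(2:ℕ) by norm_num, Real.rpow_neg htpos.le, Real.rpow_natCast,
    div_eq_mul_inv]

lemma g_bound (x T : ℝ) (hT : 1 ≤ T) (hden : ∀ t : ℝ, T ≤ t → t ^ 2 / 2 ≤ t ^ 2 + x) :
    ∀ t : ℝ, T ≤ t → |2 * t * Real.sin (t ^ 3 / 3 + x * t) / (t ^ 2 + x) ^ 2| ≤ 8 / t ^ 3 := by
  intro t ht
  have ht1 : (1:ℝ) ≤ t := hT.trans ht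
  have htpos : (0:ℝ) < t := by linarith
  have hd := hden t ht
  have hdpos : 0 < t ^ 2 + x := by nlinarith
  rw [abs_div, abs_of_nonneg (by positivity : (0:ℝ) ≤ (t ^ 2 + x) ^ 2)]
  rw [div_le_div_iff₀ (by positivity) (by positivity)]
  have hnum : |2 * t * Real.sin (t ^ 3 / 3 + x * t)| ≤ 2 * t := by
    rw [abs_mul]
    calc |2 * t| * |Real.sin (t ^ 3 / 3 + x * t)| ≤ |2 * t| * 1 := by
          gcongr; exact Real.abs_sin_le_one _
      _ = 2 * t := by rw [mul_one, abs_of_nonneg (by positivity)]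
  have h4 : t ^ 4 / 4 ≤ (t ^ 2 + x) ^ 2 := by nlinarith
  have h5 := mul_le_mul_of_nonneg_right hnum (by positivity : (0:ℝ) ≤ t ^ 3)
  nlinarith [h4, h5]

lemma h_bound (x T : ℝ) (hT : 1 ≤ T) (hx : |x| ≤ T)
    (hden : ∀ t : ℝ, T ≤ t → t ^ 2 / 2 ≤ t ^ 2 + x) :
    ∀ t : ℝ, T ≤ t → |(x - t ^ 2) / (t ^ 2 + x) ^ 2 * Real.cos (t ^ 3 / 3 + x * t)| ≤ 8 / t ^ 2 := by
  intro t ht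
  have ht1 : (1:ℝ) ≤ t := hT.trans ht
  have htpos : (0:ℝ) < t := by linarith
  have hd := hden t ht
  have hdpos : 0 < t ^ 2 + x := by nlinarith
  have hxb := abs_le.1 hx
  rw [abs_mul, abs_div, abs_of_nonneg (by positivity : (0:ℝ) ≤ (t ^ 2 + x) ^ 2)]
  have hnum : |x - t ^ 2| ≤ 2 * t ^ 2 := by
    rw [abs_le]
    constructor <;> nlinarith
  calc |x - t ^ 2| / (t ^ 2 + x) ^ 2 * |Real.cos (t ^ 3 / 3 + x * t)|
      ≤ |x - t ^ 2| / (t ^ 2 + x) ^ 2 * 1 := by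
        gcongr; exact Real.abs_cos_le_one _
    _ = |x - t ^ 2| / (t ^ 2 + x) ^ 2 := mul_one _
    _ ≤ 8 / t ^ 2 := by
        rw [div_le_div_iff₀ (by positivity) (by positivity)]
        nlinarith [abs_nonneg (x - t ^ 2), sq_nonneg t]
lemma hden_of (x M : ℝ) (hM : 1 ≤ M) (hx : |x| ≤ M) :
    ∀ t : ℝ, 2 * M + 1 ≤ t → t ^ 2 / 2 ≤ t ^ 2 + x := by
  intro t ht
  have hxb := abs_le.1 hx
  nlinarith [sq_nonneg (t - (2 * M + 1))]

lemma T_ge_one (M : ℝ) (hM : 1 ≤ M) : (1:ℝ) ≤ 2 * M + 1 := by linarith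

lemma sin_term_tendsto (x T : ℝ) (hT : 1 ≤ T)
    (hden : ∀ t : ℝ, T ≤ t → t ^ 2 / 2 ≤ t ^ 2 + x) :
    Tendsto (fun R : ℝ => Real.sin (R ^ 3 / 3 + x * R) / (R ^ 2 + x)) atTop (𝓝 0) := by
  have h2R2 : Tendsto (fun R : ℝ => 2 / R ^ 2) atTop (𝓝 0) := by
    simpa [div_eq_mul_inv] using
      ((tendsto_pow_atTop (two_ne_zero)).inv_tendsto_atTop).const_mul (2:ℝ)
  apply squeeze_zero_norm' _ h2R2
  filter_upwards [eventually_ge_atTop T] with R hR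
  have hR1 : (1:ℝ) ≤ R := hT.trans hR
  have hd := hden R hR
  have hdpos : 0 < R ^ 2 + x := by nlinarith
  rw [Real.norm_eq_abs, abs_div, abs_of_pos hdpos]
  calc |Real.sin (R ^ 3 / 3 + x * R)| / (R ^ 2 + x) ≤ 1 / (R ^ 2 + x) := by
        gcongr; exact Real.abs_sin_le_one _
    _ ≤ 2 / R ^ 2 := by
        rw [div_le_div_iff₀ hdpos (by positivity)]
        nlinarith

lemma cos_term_tendsto (x T : ℝ) (hT : 1 ≤ T)
    (hden : ∀ t : ℝ, T ≤ t → t ^ 2 / 2 ≤ t ^ 2 + x) :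
    Tendsto (fun R : ℝ => -(R * Real.cos (R ^ 3 / 3 + x * R) / (R ^ 2 + x))) atTop (𝓝 0) := by
  have h2R : Tendsto (fun R : ℝ => 2 / R) atTop (𝓝 0) := by
    simpa [div_eq_mul_inv] using (tendsto_id.inv_tendsto_atTop (α := ℝ)).const_mul (2:ℝ)
  apply squeeze_zero_norm' _ h2R
  filter_upwards [eventually_ge_atTop T] with R hR
  have hR1 : (1:ℝ) ≤ R := hT.trans hR
  have hd := hden R hR
  have hdpos : 0 < R ^ 2 + x := by nlinarith
  rw [norm_neg, Real.norm_eq_abs, abs_div, abs_of_pos hdpos, abs_mul]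
  calc |R| * |Real.cos (R ^ 3 / 3 + x * R)| / (R ^ 2 + x) ≤ R * 1 / (R ^ 2 + x) := by
        gcongr
        · rw [abs_of_nonneg (by linarith)]
        · exact Real.abs_cos_le_one _
    _ ≤ 2 / R := by
        rw [mul_one, div_le_div_iff₀ hdpos (by linarith)]
        nlinarith

lemma g_contOn (x T : ℝ) (hT : 1 ≤ T) (hden : ∀ t : ℝ, T ≤ t → t ^ 2 / 2 ≤ t ^ 2 + x) :
    ContinuousOn (fun t : ℝ => 2 * t * Real.sin (t ^ 3 / 3 + x * t) / (t ^ 2 + x) ^ 2)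
      {t : ℝ | T ≤ t} := by
  apply ContinuousOn.div (by fun_prop) (by fun_prop)
  intro t ht
  have h1 : (1:ℝ) ≤ t := hT.trans ht
  have := hden t ht
  have : 0 < t ^ 2 + x := by nlinarith
  positivity

lemma h_contOn (x T : ℝ) (hT : 1 ≤ T) (hden : ∀ t : ℝ, T ≤ t → t ^ 2 / 2 ≤ t ^ 2 + x) :
    ContinuousOn (fun t : ℝ => (x - t ^ 2) / (t ^ 2 + x) ^ 2 * Real.cos (t ^ 3 / 3 + x * t))
      {t : ℝ | T ≤ t} := by
  apply ContinuousOn.mul _ (by fun_prop)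
  apply ContinuousOn.div (by fun_prop) (by fun_prop)
  intro t ht
  have h1 : (1:ℝ) ≤ t := hT.trans ht
  have := hden t ht
  have : 0 < t ^ 2 + x := by nlinarith
  positivity

lemma g_integrableOn (x T : ℝ) (hT : 1 ≤ T)
    (hden : ∀ t : ℝ, T ≤ t → t ^ 2 / 2 ≤ t ^ 2 + x) :
    IntegrableOn (fun t : ℝ => 2 * t * Real.sin (t ^ 3 / 3 + x * t) / (t ^ 2 + x) ^ 2) (Ioi T) := by
  apply Integrable.mono' (integrableOn_inv_cube T (by linarith))
  · exact (((g_contOn x T hT hden).mono (fun t ht => le_of_lt ht)).aestronglyMeasurable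
      measurableSet_Ioi)
  · rw [ae_restrict_iff' measurableSet_Ioi]
    exact ae_of_all _ fun t ht => by
      rw [Real.norm_eq_abs]
      exact g_bound x T hT hden t (le_of_lt ht)

lemma h_integrableOn (x T : ℝ) (hT : 1 ≤ T) (hx : |x| ≤ T)
    (hden : ∀ t : ℝ, T ≤ t → t ^ 2 / 2 ≤ t ^ 2 + x) :
    IntegrableOn (fun t : ℝ => (x - t ^ 2) / (t ^ 2 + x) ^ 2 * Real.cos (t ^ 3 / 3 + x * t))
      (Ioi T) := by
  apply Integrable.mono' (integrableOn_inv_sq' T (by linarith))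
  · exact (((h_contOn x T hT hden).mono (fun t ht => le_of_lt ht)).aestronglyMeasurable
      measurableSet_Ioi)
  · rw [ae_restrict_iff' measurableSet_Ioi]
    exact ae_of_all _ fun t ht => by
      rw [Real.norm_eq_abs]
      exact h_bound x T hT hx hden t (le_of_lt ht)

lemma tendsto_Acal_repr (x M : ℝ) (hM : 1 ≤ M) (hx : |x| ≤ M) :
    Tendsto (fun R => Acal R x) atTop
      (𝓝 (Acal (2*M+1) x - Real.sin ((2*M+1) ^ 3 / 3 + x * (2*M+1)) / ((2*M+1) ^ 2 + x)
        + ∫ t in Ioi (2*M+1), 2 * t * Real.sin (t ^ 3 / 3 + x * t) / (t ^ 2 + x) ^ 2)) := by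
  set T : ℝ := 2*M+1 with hTdef
  have hT : (1:ℝ) ≤ T := T_ge_one M hM
  have hden := hden_of x M hM hx
  have h3 := intervalIntegral_tendsto_integral_Ioi T (g_integrableOn x T hT hden) tendsto_id
  have h4 := sin_term_tendsto x T hT hden
  have hc : Tendsto (fun _ : ℝ => Acal T x - Real.sin (T ^ 3 / 3 + x * T) / (T ^ 2 + x))
      atTop (𝓝 (Acal T x - Real.sin (T ^ 3 / 3 + x * T) / (T ^ 2 + x))) := tendsto_const_nhds
  have hfin := hc.add (h4.add h3)
  rw [show (Acal T x - Real.sin (T ^ 3 / 3 + x * T) / (T ^ 2 + x))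
      + (0 + ∫ t in Ioi T, 2 * t * Real.sin (t ^ 3 / 3 + x * t) / (t ^ 2 + x) ^ 2)
      = Acal T x - Real.sin (T ^ 3 / 3 + x * T) / (T ^ 2 + x)
      + ∫ t in Ioi T, 2 * t * Real.sin (t ^ 3 / 3 + x * t) / (t ^ 2 + x) ^ 2 by ring] at hfin
  apply hfin.congr'
  filter_upwards [eventually_ge_atTop T] with R hR
  have hsplit : Acal T x + (∫ t in T..R, Real.cos (t ^ 3 / 3 + x * t)) = Acal R x :=
    intervalIntegral.integral_add_adjacent_intervals
      ((by fun_prop : Continuous fun t : ℝ => Real.cos (t ^ 3 / 3 + x * t)).intervalIntegrable 0 T)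
      ((by fun_prop : Continuous fun t : ℝ => Real.cos (t ^ 3 / 3 + x * t)).intervalIntegrable T R)
  rw [← hsplit, ibp_cos x T R hT hR hden]
  simp only [id_eq]
  ring

lemma tendsto_Dcal_repr (x M : ℝ) (hM : 1 ≤ M) (hx : |x| ≤ M) :
    Tendsto (fun R => Dcal R x) atTop
      (𝓝 (Dcal (2*M+1) x + (2*M+1) * Real.cos ((2*M+1) ^ 3 / 3 + x * (2*M+1)) / ((2*M+1) ^ 2 + x)
        + ∫ t in Ioi (2*M+1), (x - t ^ 2) / (t ^ 2 + x) ^ 2 * Real.cos (t ^ 3 / 3 + x * t))) := by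
  set T : ℝ := 2*M+1 with hTdef
  have hT : (1:ℝ) ≤ T := T_ge_one M hM
  have hxT : |x| ≤ T := by rw [hTdef]; linarith
  have hden := hden_of x M hM hx
  have h3 := intervalIntegral_tendsto_integral_Ioi T (h_integrableOn x T hT hxT hden) tendsto_id
  have h4 := cos_term_tendsto x T hT hden
  have hc : Tendsto (fun _ : ℝ => Dcal T x + T * Real.cos (T ^ 3 / 3 + x * T) / (T ^ 2 + x))
      atTop (𝓝 (Dcal T x + T * Real.cos (T ^ 3 / 3 + x * T) / (T ^ 2 + x))) := tendsto_const_nhds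
  have hfin := hc.add (h4.add h3)
  rw [show (Dcal T x + T * Real.cos (T ^ 3 / 3 + x * T) / (T ^ 2 + x))
      + (0 + ∫ t in Ioi T, (x - t ^ 2) / (t ^ 2 + x) ^ 2 * Real.cos (t ^ 3 / 3 + x * t))
      = Dcal T x + T * Real.cos (T ^ 3 / 3 + x * T) / (T ^ 2 + x)
      + ∫ t in Ioi T, (x - t ^ 2) / (t ^ 2 + x) ^ 2 * Real.cos (t ^ 3 / 3 + x * t) by ring] at hfin
  apply hfin.congr'
  filter_upwards [eventually_ge_atTop T] with R hR
  have hsplit : Dcal T x + (∫ t in T..R, t * Real.sin (t ^ 3 / 3 + x * t)) = Dcal R x :=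
    intervalIntegral.integral_add_adjacent_intervals
      ((by fun_prop : Continuous fun t : ℝ => t * Real.sin (t ^ 3 / 3 + x * t)).intervalIntegrable 0 T)
      ((by fun_prop : Continuous fun t : ℝ => t * Real.sin (t ^ 3 / 3 + x * t)).intervalIntegrable T R)
  rw [← hsplit, ibp_tsin x T R hT hR hden]
  simp only [id_eq]
  ring
lemma Acal_bound (M : ℝ) (hM : 1 ≤ M) :
    ∀ R : ℝ, 0 ≤ R → ∀ x : ℝ, |x| ≤ M → |Acal R x| ≤ (2*M+1) + 8 := by
  intro R hR0 x hx
  set T : ℝ := 2*M+1 with hTdef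
  have hT : (1:ℝ) ≤ T := T_ge_one M hM
  have hden := hden_of x M hM hx
  have hbase : ∀ S : ℝ, 0 ≤ S → |Acal S x| ≤ S := by
    intro S hS
    have h := intervalIntegral.norm_integral_le_of_norm_le_const
      (C := 1) (a := 0) (b := S) (f := fun t => Real.cos (t ^ 3 / 3 + x * t))
      (fun t _ => by rw [Real.norm_eq_abs]; exact Real.abs_cos_le_one _)
    rw [Real.norm_eq_abs] at h
    calc |Acal S x| ≤ 1 * |S - 0| := h
      _ = S := by rw [one_mul, sub_zero, abs_of_nonneg hS]
  rcases le_or_gt R T with hRT | hTR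
  · calc |Acal R x| ≤ R := hbase R hR0
      _ ≤ T + 8 := by linarith
  · have hTR' : T ≤ R := hTR.le
    have hsplit : Acal T x + (∫ t in T..R, Real.cos (t ^ 3 / 3 + x * t)) = Acal R x :=
      intervalIntegral.integral_add_adjacent_intervals
        ((by fun_prop : Continuous fun t : ℝ => Real.cos (t ^ 3 / 3 + x * t)).intervalIntegrable 0 T)
        ((by fun_prop : Continuous fun t : ℝ => Real.cos (t ^ 3 / 3 + x * t)).intervalIntegrable T R)
    rw [← hsplit]
    have h1 : |Acal T x| ≤ T := hbase T (by linarith)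
    rw [ibp_cos x T R hT hTR' hden]
    -- bound the two boundary terms
    have hbd : ∀ S : ℝ, T ≤ S → |Real.sin (S ^ 3 / 3 + x * S) / (S ^ 2 + x)| ≤ 2 := by
      intro S hS
      have hS1 : (1:ℝ) ≤ S := hT.trans hS
      have hd := hden S hS
      have hdpos : 0 < S ^ 2 + x := by nlinarith
      rw [abs_div, abs_of_pos hdpos]
      rw [div_le_iff₀ hdpos]
      have := Real.abs_sin_le_one (S ^ 3 / 3 + x * S)
      nlinarith
    have h2 : |Real.sin (R ^ 3 / 3 + x * R) / (R ^ 2 + x)| ≤ 2 := hbd R hTR'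
    have h3 : |Real.sin (T ^ 3 / 3 + x * T) / (T ^ 2 + x)| ≤ 2 := hbd T le_rfl
    have h4 : |∫ t in T..R, 2 * t * Real.sin (t ^ 3 / 3 + x * t) / (t ^ 2 + x) ^ 2| ≤ 4 := by
      have hTpos : (0:ℝ) < T := by linarith
      have hnorm := intervalIntegral.norm_integral_le_integral_norm
        (f := fun t : ℝ => 2 * t * Real.sin (t ^ 3 / 3 + x * t) / (t ^ 2 + x) ^ 2) hTR' (μ := volume)
      have hmono : (∫ t in T..R, ‖2 * t * Real.sin (t ^ 3 / 3 + x * t) / (t ^ 2 + x) ^ 2‖)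
          ≤ ∫ t in T..R, 8 / t ^ 3 := by
        apply intervalIntegral.integral_mono_on hTR'
        · apply ContinuousOn.intervalIntegrable
          rw [uIcc_of_le hTR']
          exact ((g_contOn x T hT hden).mono (fun t ht => ht.1)).norm
        · apply ContinuousOn.intervalIntegrable
          apply ContinuousOn.div continuousOn_const (by fun_prop)
          intro t ht
          rw [uIcc_of_le hTR'] at ht
          exact pow_ne_zero _ (by nlinarith [ht.1] : (0:ℝ) < t).ne'
        · intro t ht
          rw [Real.norm_eq_abs]
          exact g_bound x T hT hden t ht.1
      rw [Real.norm_eq_abs] at hnorm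
      have hval : (∫ t in T..R, 8 / t ^ 3) = 4 / T ^ 2 - 4 / R ^ 2 :=
        int_inv_cube T R (by linarith) hTR'
      have hT2 : (1:ℝ) ≤ T ^ 2 := by nlinarith
      have hR2 : (0:ℝ) < R ^ 2 := by nlinarith
      have : 4 / T ^ 2 - 4 / R ^ 2 ≤ 4 := by
        have h5 : 4 / T ^ 2 ≤ 4 := by
          rw [div_le_iff₀ (by linarith)]; nlinarith
        have h6 : 0 ≤ 4 / R ^ 2 := by positivity
        linarith
      linarith
    calc |Acal T x + (Real.sin (R ^ 3 / 3 + x * R) / (R ^ 2 + x)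
          - Real.sin (T ^ 3 / 3 + x * T) / (T ^ 2 + x)
          + ∫ t in T..R, 2 * t * Real.sin (t ^ 3 / 3 + x * t) / (t ^ 2 + x) ^ 2)|
        ≤ |Acal T x| + (|Real.sin (R ^ 3 / 3 + x * R) / (R ^ 2 + x)|
          + |Real.sin (T ^ 3 / 3 + x * T) / (T ^ 2 + x)|
          + |∫ t in T..R, 2 * t * Real.sin (t ^ 3 / 3 + x * t) / (t ^ 2 + x) ^ 2|) := by
          have := abs_add_le (Acal T x) (Real.sin (R ^ 3 / 3 + x * R) / (R ^ 2 + x)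
            - Real.sin (T ^ 3 / 3 + x * T) / (T ^ 2 + x)
            + ∫ t in T..R, 2 * t * Real.sin (t ^ 3 / 3 + x * t) / (t ^ 2 + x) ^ 2)
          have h7 := abs_add_le (Real.sin (R ^ 3 / 3 + x * R) / (R ^ 2 + x)
            - Real.sin (T ^ 3 / 3 + x * T) / (T ^ 2 + x))
            (∫ t in T..R, 2 * t * Real.sin (t ^ 3 / 3 + x * t) / (t ^ 2 + x) ^ 2)
          have h8 := abs_sub (Real.sin (R ^ 3 / 3 + x * R) / (R ^ 2 + x))
            (Real.sin (T ^ 3 / 3 + x * T) / (T ^ 2 + x))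
          linarith
      _ ≤ T + (2 + 2 + 4) := by linarith
      _ = T + 8 := by ring

lemma Dcal_bound (M : ℝ) (hM : 1 ≤ M) :
    ∀ R : ℝ, 0 ≤ R → ∀ x : ℝ, |x| ≤ M → |Dcal R x| ≤ (2*M+1)^2 + 20 := by
  intro R hR0 x hx
  set T : ℝ := 2*M+1 with hTdef
  have hT : (1:ℝ) ≤ T := T_ge_one M hM
  have hxT : |x| ≤ T := by rw [hTdef]; linarith
  have hden := hden_of x M hM hx
  have hbase : ∀ S : ℝ, 0 ≤ S → |Dcal S x| ≤ S ^ 2 := by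
    intro S hS
    have h := intervalIntegral.norm_integral_le_of_norm_le_const
      (C := S) (a := 0) (b := S) (f := fun t => t * Real.sin (t ^ 3 / 3 + x * t))
      (fun t ht => by
        rw [Real.norm_eq_abs, abs_mul]
        rw [uIoc_of_le hS] at ht
        calc |t| * |Real.sin (t ^ 3 / 3 + x * t)| ≤ |t| * 1 := by
              gcongr; exact Real.abs_sin_le_one _
          _ = t := by rw [mul_one, abs_of_nonneg ht.1.le]
          _ ≤ S := ht.2)
    rw [Real.norm_eq_abs] at h
    calc |Dcal S x| ≤ S * |S - 0| := h
      _ = S ^ 2 := by rw [sub_zero, abs_of_nonneg hS]; ring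
  rcases le_or_gt R T with hRT | hTR
  · calc |Dcal R x| ≤ R ^ 2 := hbase R hR0
      _ ≤ T ^ 2 + 20 := by nlinarith
  · have hTR' : T ≤ R := hTR.le
    have hsplit : Dcal T x + (∫ t in T..R, t * Real.sin (t ^ 3 / 3 + x * t)) = Dcal R x :=
      intervalIntegral.integral_add_adjacent_intervals
        ((by fun_prop : Continuous fun t : ℝ => t * Real.sin (t ^ 3 / 3 + x * t)).intervalIntegrable 0 T)
        ((by fun_prop : Continuous fun t : ℝ => t * Real.sin (t ^ 3 / 3 + x * t)).intervalIntegrable T R)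
    rw [← hsplit]
    have h1 : |Dcal T x| ≤ T ^ 2 := hbase T (by linarith)
    rw [ibp_tsin x T R hT hTR' hden]
    have hbd : ∀ S : ℝ, T ≤ S → |S * Real.cos (S ^ 3 / 3 + x * S) / (S ^ 2 + x)| ≤ 2 := by
      intro S hS
      have hS1 : (1:ℝ) ≤ S := hT.trans hS
      have hd := hden S hS
      have hdpos : 0 < S ^ 2 + x := by nlinarith
      rw [abs_div, abs_of_pos hdpos, div_le_iff₀ hdpos, abs_mul]
      have hc := Real.abs_cos_le_one (S ^ 3 / 3 + x * S)
      have : |S| = S := abs_of_nonneg (by linarith)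
      nlinarith [abs_nonneg (Real.cos (S ^ 3 / 3 + x * S))]
    have h2 : |R * Real.cos (R ^ 3 / 3 + x * R) / (R ^ 2 + x)| ≤ 2 := hbd R hTR'
    have h3 : |T * Real.cos (T ^ 3 / 3 + x * T) / (T ^ 2 + x)| ≤ 2 := hbd T le_rfl
    have h4 : |∫ t in T..R, (x - t ^ 2) / (t ^ 2 + x) ^ 2 * Real.cos (t ^ 3 / 3 + x * t)| ≤ 8 := by
      have hnorm := intervalIntegral.norm_integral_le_integral_norm
        (f := fun t : ℝ => (x - t ^ 2) / (t ^ 2 + x) ^ 2 * Real.cos (t ^ 3 / 3 + x * t)) hTR'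
        (μ := volume)
      have hmono : (∫ t in T..R, ‖(x - t ^ 2) / (t ^ 2 + x) ^ 2 * Real.cos (t ^ 3 / 3 + x * t)‖)
          ≤ ∫ t in T..R, 8 / t ^ 2 := by
        apply intervalIntegral.integral_mono_on hTR'
        · apply ContinuousOn.intervalIntegrable
          rw [uIcc_of_le hTR']
          exact ((h_contOn x T hT hden).mono (fun t ht => ht.1)).norm
        · apply ContinuousOn.intervalIntegrable
          apply ContinuousOn.div continuousOn_const (by fun_prop)
          intro t ht
          rw [uIcc_of_le hTR'] at ht
          exact pow_ne_zero _ (by nlinarith [ht.1] : (0:ℝ) < t).ne'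
        · intro t ht
          rw [Real.norm_eq_abs]
          exact h_bound x T hT hxT hden t ht.1
      rw [Real.norm_eq_abs] at hnorm
      have hval : (∫ t in T..R, 8 / t ^ 2) = 8 / T - 8 / R :=
        int_inv_sq T R (by linarith) hTR'
      have : 8 / T - 8 / R ≤ 8 := by
        have h5 : 8 / T ≤ 8 := by rw [div_le_iff₀ (by linarith)]; nlinarith
        have h6 : 0 ≤ 8 / R := by positivity
        linarith
      linarith
    calc |Dcal T x + (-(R * Real.cos (R ^ 3 / 3 + x * R) / (R ^ 2 + x))
          + T * Real.cos (T ^ 3 / 3 + x * T) / (T ^ 2 + x)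
          + ∫ t in T..R, (x - t ^ 2) / (t ^ 2 + x) ^ 2 * Real.cos (t ^ 3 / 3 + x * t))|
        ≤ |Dcal T x| + (|R * Real.cos (R ^ 3 / 3 + x * R) / (R ^ 2 + x)|
          + |T * Real.cos (T ^ 3 / 3 + x * T) / (T ^ 2 + x)|
          + |∫ t in T..R, (x - t ^ 2) / (t ^ 2 + x) ^ 2 * Real.cos (t ^ 3 / 3 + x * t)|) := by
          have := abs_add_le (Dcal T x) (-(R * Real.cos (R ^ 3 / 3 + x * R) / (R ^ 2 + x))
            + T * Real.cos (T ^ 3 / 3 + x * T) / (T ^ 2 + x)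
            + ∫ t in T..R, (x - t ^ 2) / (t ^ 2 + x) ^ 2 * Real.cos (t ^ 3 / 3 + x * t))
          have h7 := abs_add_le (-(R * Real.cos (R ^ 3 / 3 + x * R) / (R ^ 2 + x))
            + T * Real.cos (T ^ 3 / 3 + x * T) / (T ^ 2 + x))
            (∫ t in T..R, (x - t ^ 2) / (t ^ 2 + x) ^ 2 * Real.cos (t ^ 3 / 3 + x * t))
          have h8 := abs_add_le (-(R * Real.cos (R ^ 3 / 3 + x * R) / (R ^ 2 + x)))
            (T * Real.cos (T ^ 3 / 3 + x * T) / (T ^ 2 + x))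
          rw [abs_neg] at h8
          linarith
      _ ≤ T ^ 2 + (2 + 2 + 8) := add_le_add h1 (add_le_add (add_le_add h2 h3) h4)
      _ ≤ T ^ 2 + 20 := by linarith
noncomputable def Flim (x : ℝ) : ℝ := limUnder atTop (fun R : ℝ => Acal R x)
noncomputable def Dlim (x : ℝ) : ℝ := limUnder atTop (fun R : ℝ => Dcal R x)

lemma M_ge_one (x : ℝ) : (1:ℝ) ≤ |x| + 1 := by linarith [abs_nonneg x]

lemma tendsto_Acal (x : ℝ) : Tendsto (fun R => Acal R x) atTop (𝓝 (Flim x)) := by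
  have h := tendsto_Acal_repr x (|x| + 1) (M_ge_one x) (by linarith [abs_nonneg x])
  rw [Flim, h.limUnder_eq]
  exact h

lemma tendsto_Dcal (x : ℝ) : Tendsto (fun R => Dcal R x) atTop (𝓝 (Dlim x)) := by
  have h := tendsto_Dcal_repr x (|x| + 1) (M_ge_one x) (by linarith [abs_nonneg x])
  rw [Dlim, h.limUnder_eq]
  exact h

lemma abs_le_of_mem_uIoc {s y : ℝ} (hs : s ∈ Ι (0:ℝ) y) : |s| ≤ |y| := by
  rcases le_total 0 y with h | h
  · rw [uIoc_of_le h] at hs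
    rw [abs_of_pos hs.1, abs_of_nonneg h]
    exact hs.2
  · rw [uIoc_of_ge h] at hs
    rw [abs_of_nonpos hs.2, abs_of_nonpos h]
    linarith [hs.1]

lemma dct_helper (y C : ℝ) (Fn : ℝ → ℝ → ℝ) (f : ℝ → ℝ)
    (hcont : ∀ R : ℝ, Continuous (Fn R))
    (hbound : ∀ᶠ R in (atTop : Filter ℝ), ∀ s ∈ Ι (0:ℝ) y, |Fn R s| ≤ C)
    (hlim : ∀ s, Tendsto (fun R => Fn R s) atTop (𝓝 (f s))) :
    Tendsto (fun R => ∫ s in (0:ℝ)..y, Fn R s) atTop (𝓝 (∫ s in (0:ℝ)..y, f s)) := by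
  apply intervalIntegral.tendsto_integral_filter_of_dominated_convergence (bound := fun _ => C)
  · exact Eventually.of_forall fun R => (hcont R).aestronglyMeasurable
  · filter_upwards [hbound] with R hR
    exact ae_of_all _ fun s hs => by rw [Real.norm_eq_abs]; exact hR s hs
  · exact intervalIntegrable_const
  · exact ae_of_all _ fun s _ => hlim s

lemma Flim_cont : Continuous Flim := by
  rw [continuous_iff_continuousAt]
  intro x₀
  set M : ℝ := |x₀| + 1 with hMdef
  set T : ℝ := 2 * M + 1 with hTdef
  have hM : (1:ℝ) ≤ M := M_ge_one x₀
  have hT : (1:ℝ) ≤ T := T_ge_one M hM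
  have hx₀ : |x₀| ≤ M := by rw [hMdef]; linarith [abs_nonneg x₀]
  have hnear : ∀ᶠ x in 𝓝 x₀, |x| ≤ M := by
    filter_upwards [eventually_abs_sub_lt x₀ one_pos] with x hx
    calc |x| = |x₀ + (x - x₀)| := by ring_nf
      _ ≤ |x₀| + |x - x₀| := abs_add_le _ _
      _ ≤ M := by rw [hMdef]; linarith
  have hEq : Flim =ᶠ[𝓝 x₀] fun x =>
      Acal T x - Real.sin (T ^ 3 / 3 + x * T) / (T ^ 2 + x)
        + ∫ t in Ioi T, 2 * t * Real.sin (t ^ 3 / 3 + x * t) / (t ^ 2 + x) ^ 2 := by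
    filter_upwards [hnear] with x hx
    exact (tendsto_Acal_repr x M hM hx).limUnder_eq
  have hden₀ := hden_of x₀ M hM hx₀
  have hdpos₀ : 0 < T ^ 2 + x₀ := by
    have := hden₀ T le_rfl
    nlinarith
  have hcontΦ : ContinuousAt (fun x => Acal T x - Real.sin (T ^ 3 / 3 + x * T) / (T ^ 2 + x)
      + ∫ t in Ioi T, 2 * t * Real.sin (t ^ 3 / 3 + x * t) / (t ^ 2 + x) ^ 2) x₀ := by
    apply ContinuousAt.add
    · apply ContinuousAt.sub
      · exact (Acal_cont T).continuousAt
      · exact ContinuousAt.div (by fun_prop) (by fun_prop) hdpos₀.ne'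
    · apply continuousAt_of_dominated (bound := fun t => 8 / t ^ 3)
      · filter_upwards [hnear] with x hx
        exact ((g_contOn x T hT (hden_of x M hM hx)).mono
          (fun t ht => le_of_lt ht)).aestronglyMeasurable measurableSet_Ioi
      · filter_upwards [hnear] with x hx
        rw [ae_restrict_iff' measurableSet_Ioi]
        exact ae_of_all _ fun t ht => by
          rw [Real.norm_eq_abs]
          exact g_bound x T hT (hden_of x M hM hx) t (le_of_lt ht)
      · exact integrableOn_inv_cube T (by linarith)
      · rw [ae_restrict_iff' measurableSet_Ioi]
        apply ae_of_all _ fun t ht => ?_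
        have htT : T ≤ t := le_of_lt ht
        have h1 : (1:ℝ) ≤ t := hT.trans htT
        have hd := hden₀ t htT
        have hdpos : 0 < t ^ 2 + x₀ := by nlinarith
        exact ContinuousAt.div (by fun_prop) (by fun_prop) (by positivity)
  exact hcontΦ.congr hEq.symm

lemma I1_lim (y : ℝ) : Flim y = Flim 0 - ∫ s in (0:ℝ)..y, Dlim s := by
  have hid : ∀ R : ℝ, Acal R y - Acal R 0 = ∫ s in (0:ℝ)..y, -Dcal R s := by
    intro R
    have h := intervalIntegral.integral_eq_sub_of_hasDerivAt (f := fun s => Acal R s)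
      (f' := fun s => -Dcal R s) (a := 0) (b := y)
      (fun s _ => hasDerivAt_Acal R s)
      (((Dcal_cont R).neg).intervalIntegrable 0 y)
    linarith [h]
  have hL : Tendsto (fun R => Acal R y - Acal R 0) atTop (𝓝 (Flim y - Flim 0)) :=
    (tendsto_Acal y).sub (tendsto_Acal 0)
  have hR : Tendsto (fun R => ∫ s in (0:ℝ)..y, -Dcal R s) atTop
      (𝓝 (∫ s in (0:ℝ)..y, -Dlim s)) := by
    apply dct_helper y ((2*(|y|+1)+1)^2 + 20) _ _ (fun R => (Dcal_cont R).neg)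
    · filter_upwards [eventually_ge_atTop (0:ℝ)] with R hR0
      intro s hs
      rw [Pi.neg_apply, abs_neg]
      exact Dcal_bound (|y|+1) (M_ge_one y) R hR0 s
        (le_trans (abs_le_of_mem_uIoc hs) (by linarith))
    · exact fun s => (tendsto_Dcal s).neg
  have huniq := tendsto_nhds_unique (hL.congr hid) hR
  rw [intervalIntegral.integral_neg] at huniq
  linarith [huniq]

lemma I2_lim (y : ℝ) : Dlim y = Dlim 0 - ∫ s in (0:ℝ)..y, s * Flim s := by
  have hid : ∀ R : ℝ, Dcal R y - Dcal R 0
      = (∫ s in (0:ℝ)..y, Real.sin (R ^ 3 / 3 + s * R))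
        - ∫ s in (0:ℝ)..y, s * Acal R s := by
    intro R
    have h := intervalIntegral.integral_eq_sub_of_hasDerivAt (f := fun s => Dcal R s)
      (f' := fun s => Real.sin (R ^ 3 / 3 + s * R) - s * Acal R s) (a := 0) (b := y)
      (fun s _ => hasDerivAt_Dcal R s)
      (((by fun_prop : Continuous fun s : ℝ => Real.sin (R ^ 3 / 3 + s * R)).sub
        ((show Continuous fun s : ℝ => s * Acal R s from continuous_id.mul (Acal_cont R)))).intervalIntegrable 0 y)
    rw [intervalIntegral.integral_sub
      ((by fun_prop : Continuous fun s : ℝ => Real.sin (R ^ 3 / 3 + s * R)).intervalIntegrable 0 y)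
      (((show Continuous fun s : ℝ => s * Acal R s from continuous_id.mul (Acal_cont R))).intervalIntegrable 0 y)] at h
    linarith [h]
  have hL : Tendsto (fun R => Dcal R y - Dcal R 0) atTop (𝓝 (Dlim y - Dlim 0)) :=
    (tendsto_Dcal y).sub (tendsto_Dcal 0)
  have hsin : Tendsto (fun R => ∫ s in (0:ℝ)..y, Real.sin (R ^ 3 / 3 + s * R)) atTop (𝓝 0) := by
    have h2R : Tendsto (fun R : ℝ => 2 / R) atTop (𝓝 0) := by
      simpa [div_eq_mul_inv] using (tendsto_id.inv_tendsto_atTop (α := ℝ)).const_mul (2:ℝ)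
    apply squeeze_zero_norm' _ h2R
    filter_upwards [eventually_ge_atTop (1:ℝ)] with R hR1
    have hRpos : (0:ℝ) < R := by linarith
    have hclosed : (∫ s in (0:ℝ)..y, Real.sin (R ^ 3 / 3 + s * R))
        = (Real.cos (R ^ 3 / 3) - Real.cos (R ^ 3 / 3 + y * R)) / R := by
      have key : ∀ s ∈ uIcc (0:ℝ) y, HasDerivAt (fun s : ℝ => -(Real.cos (R ^ 3 / 3 + s * R) / R))
          (Real.sin (R ^ 3 / 3 + s * R)) s := by
        intro s _
        have hinner : HasDerivAt (fun s : ℝ => R ^ 3 / 3 + s * R) R s := by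
          simpa using ((hasDerivAt_id s).mul_const R).const_add (R ^ 3 / 3)
        have h := (((Real.hasDerivAt_cos (R ^ 3 / 3 + s * R)).comp s hinner).div_const R).neg
        refine h.congr_deriv ?_
        field_simp
      have := intervalIntegral.integral_eq_sub_of_hasDerivAt key
        ((by fun_prop : Continuous fun s : ℝ => Real.sin (R ^ 3 / 3 + s * R)).intervalIntegrable 0 y)
      rw [this]
      ring
    rw [hclosed, Real.norm_eq_abs, abs_div, abs_of_pos hRpos, div_le_div_iff₀ hRpos hRpos]
    have h1 := Real.abs_cos_le_one (R ^ 3 / 3)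
    have h2 := Real.abs_cos_le_one (R ^ 3 / 3 + y * R)
    have h3 := abs_sub (Real.cos (R ^ 3 / 3)) (Real.cos (R ^ 3 / 3 + y * R))
    nlinarith [abs_nonneg (Real.cos (R ^ 3 / 3) - Real.cos (R ^ 3 / 3 + y * R))]
  have hA : Tendsto (fun R => ∫ s in (0:ℝ)..y, s * Acal R s) atTop
      (𝓝 (∫ s in (0:ℝ)..y, s * Flim s)) := by
    apply dct_helper y (|y| * (2*(|y|+1)+1+8)) _ _
      (fun R => show Continuous fun s : ℝ => s * Acal R s from continuous_id.mul (Acal_cont R))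
    · filter_upwards [eventually_ge_atTop (0:ℝ)] with R hR0
      intro s hs
      rw [abs_mul]
      have h1 := abs_le_of_mem_uIoc hs
      have h2 := Acal_bound (|y|+1) (M_ge_one y) R hR0 s (le_trans h1 (by linarith))
      have h0 : (0:ℝ) ≤ 2*(|y|+1)+1+8 := by positivity
      exact mul_le_mul h1 h2 (abs_nonneg _) (abs_nonneg _)
    · exact fun s => (tendsto_Acal s).const_mul s
  have hRside := hsin.sub hA
  rw [zero_sub] at hRside
  have huniq := tendsto_nhds_unique (hL.congr hid) hRside
  linarith [huniq]

lemma hasDerivAt_Dlim (y : ℝ) : HasDerivAt Dlim (-(y * Flim y)) y := by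
  have hrep : Dlim = fun y => Dlim 0 - ∫ s in (0:ℝ)..y, s * Flim s := funext I2_lim
  rw [hrep]
  have h := (Continuous.integral_hasStrictDerivAt
    (f := fun s => s * Flim s) ((show Continuous fun s : ℝ => s * Flim s from continuous_id.mul Flim_cont)) 0 y).hasDerivAt
  exact h.const_sub (Dlim 0)

lemma Dlim_cont : Continuous Dlim :=
  continuous_iff_continuousAt.2 fun y => (hasDerivAt_Dlim y).continuousAt

lemma hasDerivAt_Flim (y : ℝ) : HasDerivAt Flim (-Dlim y) y := by
  have hrep : Flim = fun y => Flim 0 - ∫ s in (0:ℝ)..y, Dlim s := funext I1_lim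
  rw [hrep]
  have h := (Continuous.integral_hasStrictDerivAt (f := Dlim) Dlim_cont 0 y).hasDerivAt
  exact h.const_sub (Flim 0)

lemma Ai_eq : Ai = fun x => (1 / Real.pi) * Flim x := rfl

lemma hasDerivAt_Ai (x : ℝ) : HasDerivAt Ai (-(1 / Real.pi * Dlim x)) x := by
  rw [Ai_eq]
  have h := (hasDerivAt_Flim x).const_mul (1 / Real.pi)
  rwa [mul_neg] at h

lemma deriv_Ai : deriv Ai = fun x => -(1 / Real.pi * Dlim x) :=
  funext fun x => (hasDerivAt_Ai x).deriv

lemma hasDerivAt_deriv_Ai (x : ℝ) :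
    HasDerivAt (fun x => -(1 / Real.pi * Dlim x)) (-(1 / Real.pi * -(x * Flim x))) x :=
  ((hasDerivAt_Dlim x).const_mul (1 / Real.pi)).neg

/-- For every real `x`, the improper integral `(1/π)·∫₀^∞ cos(t³/3 + x·t) dt` converges
(as the limit of `∫₀^R` as `R → ∞`); the resulting function `Ai` is twice differentiable
and satisfies the Airy differential equation `Ai''(x) = x·Ai(x)` for all `x`. -/
theorem airy_integral_converges_and_solves_airy_ode :
    (∀ x : ℝ, Filter.Tendsto
        (fun R : ℝ => (1 / Real.pi) * ∫ t in (0:ℝ)..R, Real.cos (t ^ 3 / 3 + x * t))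
        Filter.atTop (nhds (Ai x))) ∧
    Differentiable ℝ Ai ∧ Differentiable ℝ (deriv Ai) ∧
    (∀ x : ℝ, deriv (deriv Ai) x = x * Ai x) := by
  refine ⟨?_, ?_, ?_, ?_⟩
  · intro x
    have h := (tendsto_Acal x).const_mul (1 / Real.pi)
    exact h
  · exact fun x => (hasDerivAt_Ai x).differentiableAt
  · rw [deriv_Ai]
    exact fun x => (hasDerivAt_deriv_Ai x).differentiableAt
  · intro x
    rw [deriv_Ai, (hasDerivAt_deriv_Ai x).deriv, Ai_eq]
    ring
end

section
/- For all real a and b, the three integrals ∫₀^∞ x·Ai'(x + a)·Ai(x + b) dx, ∫₀^∞ x·Ai(x + a)·Ai'(x + b) dx and ∫₀^∞ Ai(x + a)·Ai(x + b) dx converge absolutely and satisfy ∫₀^∞ x·Ai'(x + a)·Ai(x + b) dx + ∫₀^∞ x·Ai(x + a)·Ai'(x + b) dx + ∫₀^∞ Ai(x + a)·Ai(x + b) dx = 0. In particular, with ψᵢ, ψⱼ the L²(0,∞)-normalized translates of Ai at two of its zeros, ⟨x·ψᵢ', ψⱼ⟩ + ⟨x·ψⱼ', ψᵢ⟩ =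 −δᵢⱼ, so that the matrix (1/6)(I + 2(⟨x·ψᵢ', ψⱼ⟩)ᵢⱼ) is antisymmetric. -/
open MeasureTheory Filter Set

open Topology

noncomputable section

namespace AiryAux

/-- The phase of the Airy integral. -/
def P (x t : ℝ) : ℝ := t ^ 3 / 3 + x * t

@[fun_prop]
lemma continuous_P_t (x : ℝ) : Continuous fun t => P x t := by unfold P; fun_prop

@[fun_prop]
lemma continuous_P_x (t : ℝ) : Continuous fun x => P x t := by unfold P; fun_prop

/-- The integrand after one integration by parts. -/
def g (x t : ℝ) : ℝ := 2 * t * Real.sin (P x t) / (t ^ 2 + x) ^ 2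

lemma hasDerivAt_P_t (x t : ℝ) : HasDerivAt (fun s => P x s) (t ^ 2 + x) t := by
  have h1 : HasDerivAt (fun s : ℝ => s ^ 3 / 3 + x * s) (3 * t ^ 2 / 3 + x * 1) t :=
    ((hasDerivAt_pow 3 t).div_const 3).add ((hasDerivAt_id t).const_mul x)
  simpa [P] using h1.congr_deriv (by ring)

lemma hasDerivAt_P_x (x t : ℝ) : HasDerivAt (fun y => P y t) t x := by
  have h1 : HasDerivAt (fun y : ℝ => t ^ 3 / 3 + y * t) (0 + 1 * t) x :=
    (hasDerivAt_const x (t ^ 3 / 3)).add ((hasDerivAt_id x).mul_const t)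
  simpa [P] using h1.congr_deriv (by ring)

lemma hasDerivAt_h1 (x t : ℝ) (h : t ^ 2 + x ≠ 0) :
    HasDerivAt (fun s => Real.sin (P x s) / (s ^ 2 + x))
      (Real.cos (P x t) - g x t) t := by
  have hsin : HasDerivAt (fun s => Real.sin (P x s)) (Real.cos (P x t) * (t ^ 2 + x)) t :=
    (Real.hasDerivAt_sin (P x t)).comp t (hasDerivAt_P_t x t)
  have hden : HasDerivAt (fun s : ℝ => s ^ 2 + x) (2 * t) t := by
    simpa using (hasDerivAt_pow 2 t).add_const x
  have := hsin.div hden h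
  refine this.congr_deriv ?_
  unfold g
  field_simp

lemma contOn_g (x T : ℝ) (h : ∀ t, T ≤ t → 0 < t ^ 2 + x) :
    ContinuousOn (g x) (Ici T) := by
  apply ContinuousOn.div
  · fun_prop
  · fun_prop
  · intro t ht
    exact pow_ne_zero 2 (ne_of_gt (h t ht))

/-- The dominating bound for `g`. -/
lemma bound_integrableOn (x T : ℝ) (hT : 0 ≤ T) (h : ∀ t, T ≤ t → 0 < t ^ 2 + x) :
    IntegrableOn (fun t => 2 * t / (t ^ 2 + x) ^ 2) (Ioi T) := by
  have key : ∀ t ∈ Ioi T, HasDerivAt (fun s : ℝ => -(s ^ 2 + x)⁻¹)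
      (2 * t / (t ^ 2 + x) ^ 2) t := by
    intro t ht
    have hne : t ^ 2 + x ≠ 0 := ne_of_gt (h t (le_of_lt ht))
    have hden : HasDerivAt (fun s : ℝ => s ^ 2 + x) (2 * t) t := by
      simpa using (hasDerivAt_pow 2 t).add_const x
    have := (hden.inv hne).neg
    refine this.congr_deriv ?_
    field_simp
  have hcont : ContinuousWithinAt (fun s : ℝ => -(s ^ 2 + x)⁻¹) (Ici T) T := by
    apply ContinuousAt.continuousWithinAt
    have : (T:ℝ) ^ 2 + x ≠ 0 := ne_of_gt (h T le_rfl)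
    fun_prop (disch := assumption)
  have htend : Tendsto (fun s : ℝ => -(s ^ 2 + x)⁻¹) atTop (𝓝 (-0)) := by
    apply Tendsto.neg
    apply Tendsto.inv_tendsto_atTop
    apply tendsto_atTop_add_const_right
    exact tendsto_pow_atTop (by norm_num)
  have := integrableOn_Ioi_deriv_of_nonneg hcont key (fun t ht => by
    have h1 : 0 < t ^ 2 + x := h t (le_of_lt ht)
    have h2 : (0:ℝ) ≤ t := le_trans hT (le_of_lt ht)
    positivity) (by simpa using htend)
  exact this

lemma g_integrableOn (x T : ℝ) (hT : 0 ≤ T) (h : ∀ t, T ≤ t → 0 < t ^ 2 + x) :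
    IntegrableOn (g x) (Ioi T) := by
  apply Integrable.mono' (bound_integrableOn x T hT h)
  · exact ((contOn_g x T h).mono Ioi_subset_Ici_self).aestronglyMeasurable measurableSet_Ioi
  · filter_upwards [ae_restrict_mem measurableSet_Ioi] with t ht
    have h1 : 0 < t ^ 2 + x := h t (le_of_lt ht)
    have h2 : (0:ℝ) ≤ t := le_trans hT (le_of_lt ht)
    have : |Real.sin (P x t)| ≤ 1 := Real.abs_sin_le_one _
    rw [Real.norm_eq_abs]
    unfold g
    rw [abs_div, abs_of_nonneg (by positivity : (0:ℝ) ≤ (t ^ 2 + x) ^ 2)]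
    rw [div_le_div_iff_of_pos_right (by positivity)]
    calc |2 * t * Real.sin (P x t)| = 2 * t * |Real.sin (P x t)| := by
          rw [abs_mul, abs_of_nonneg (by positivity : (0:ℝ) ≤ 2 * t)]
      _ ≤ 2 * t * 1 := by
          apply mul_le_mul_of_nonneg_left this (by positivity)
      _ = 2 * t := by ring

/-- Key convergence lemma: the truncated Airy integral converges, with an explicit limit. -/
lemma key1 (x T : ℝ) (hT : 0 ≤ T) (h : ∀ t, T ≤ t → 0 < t ^ 2 + x) :
    Tendsto (fun R : ℝ => ∫ t in (0:ℝ)..R, Real.cos (P x t)) atTop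
      (𝓝 ((∫ t in (0:ℝ)..T, Real.cos (P x t)) - Real.sin (P x T) / (T ^ 2 + x)
          + ∫ t in Ioi T, g x t)) := by
  have hgi := g_integrableOn x T hT h
  have hsplit : ∀ R : ℝ, T ≤ R → (∫ t in (0:ℝ)..R, Real.cos (P x t)) =
      (∫ t in (0:ℝ)..T, Real.cos (P x t)) + ∫ t in T..R, Real.cos (P x t) := by
    intro R hR
    rw [intervalIntegral.integral_add_adjacent_intervals] <;>
      exact (Continuous.intervalIntegrable (by fun_prop) _ _)
  have hIBP : ∀ R : ℝ, T ≤ R → (∫ t in T..R, Real.cos (P x t)) =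
      (∫ t in T..R, g x t) + Real.sin (P x R) / (R ^ 2 + x) - Real.sin (P x T) / (T ^ 2 + x) := by
    intro R hR
    have hcg : ContinuousOn (g x) (uIcc T R) := by
      apply (contOn_g x T h).mono
      rw [uIcc_of_le hR]; exact Icc_subset_Ici_self
    have hint : ∀ t ∈ uIcc T R, HasDerivAt (fun s => Real.sin (P x s) / (s ^ 2 + x))
        (Real.cos (P x t) - g x t) t := by
      intro t ht
      rw [uIcc_of_le hR] at ht
      exact hasDerivAt_h1 x t (ne_of_gt (h t ht.1))
    have hii : IntervalIntegrable (fun t => Real.cos (P x t) - g x t) volume T R := by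
      apply IntervalIntegrable.sub
      · exact (Continuous.intervalIntegrable (by fun_prop) _ _)
      · exact hcg.intervalIntegrable
    have := intervalIntegral.integral_eq_sub_of_hasDerivAt hint hii
    rw [intervalIntegral.integral_sub (Continuous.intervalIntegrable (by fun_prop) _ _)
      hcg.intervalIntegrable] at this
    linarith [this]
  have h1 : Tendsto (fun R : ℝ => ∫ t in T..R, g x t) atTop (𝓝 (∫ t in Ioi T, g x t)) :=
    intervalIntegral_tendsto_integral_Ioi T hgi tendsto_id
  have h2 : Tendsto (fun R : ℝ => Real.sin (P x R) / (R ^ 2 + x)) atTop (𝓝 0) := by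
    refine squeeze_zero_norm' (a := fun R => (R ^ 2 + x)⁻¹) ?_ ?_
    · filter_upwards [eventually_ge_atTop T] with R hR
      have hpos : 0 < R ^ 2 + x := h R hR
      rw [Real.norm_eq_abs, abs_div, abs_of_pos hpos]
      calc |Real.sin (P x R)| / (R ^ 2 + x) ≤ 1 / (R ^ 2 + x) := by
            gcongr; exact Real.abs_sin_le_one _
        _ = (R ^ 2 + x)⁻¹ := one_div _
    · apply Tendsto.inv_tendsto_atTop
      apply tendsto_atTop_add_const_right
      exact tendsto_pow_atTop (by norm_num)
  have hcomb : Tendsto (fun R : ℝ => (∫ t in (0:ℝ)..T, Real.cos (P x t)) +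
      ((∫ t in T..R, g x t) + Real.sin (P x R) / (R ^ 2 + x)
        - Real.sin (P x T) / (T ^ 2 + x))) atTop
      (𝓝 ((∫ t in (0:ℝ)..T, Real.cos (P x t)) +
        ((∫ t in Ioi T, g x t) + 0 - Real.sin (P x T) / (T ^ 2 + x)))) :=
    tendsto_const_nhds.add ((h1.add h2).sub tendsto_const_nhds)
  have : Tendsto (fun R : ℝ => ∫ t in (0:ℝ)..R, Real.cos (P x t)) atTop
      (𝓝 ((∫ t in (0:ℝ)..T, Real.cos (P x t)) +
        ((∫ t in Ioi T, g x t) + 0 - Real.sin (P x T) / (T ^ 2 + x)))) := by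
    apply hcomb.congr'
    filter_upwards [eventually_ge_atTop T] with R hR
    rw [hsplit R hR, hIBP R hR]
  convert this using 2
  ring


lemma Ai_eq (x T : ℝ) (hT : 0 ≤ T) (h : ∀ t, T ≤ t → 0 < t ^ 2 + x) :
    Ai x = (1 / Real.pi) * ((∫ t in (0:ℝ)..T, Real.cos (P x t))
      - Real.sin (P x T) / (T ^ 2 + x) + ∫ t in Ioi T, g x t) := by
  unfold Ai
  congr 1
  exact (key1 x T hT h).limUnder_eq

/-- `x`-derivative of `g x t`. -/
def dg (x t : ℝ) : ℝ :=
  2 * t ^ 2 * Real.cos (P x t) / (t ^ 2 + x) ^ 2 - 4 * t * Real.sin (P x t) / (t ^ 2 + x) ^ 3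

lemma hasDerivAt_g_x (t x : ℝ) (h : t ^ 2 + x ≠ 0) :
    HasDerivAt (fun y => g y t) (dg x t) x := by
  have h1 : HasDerivAt (fun y => Real.sin (P y t)) (Real.cos (P x t) * t) x :=
    (Real.hasDerivAt_sin _).comp x (hasDerivAt_P_x x t)
  have h2 : HasDerivAt (fun y : ℝ => (t ^ 2 + y) ^ 2) (2 * (t ^ 2 + x) ^ 1 * 1) x := by
    exact ((hasDerivAt_id x).const_add (t ^ 2)).pow 2
  have h3 := (h1.const_mul (2 * t)).div h2 (pow_ne_zero 2 h)
  refine h3.congr_deriv ?_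
  unfold dg
  field_simp
  ring

lemma hasDerivAt_cosP_x (t x : ℝ) :
    HasDerivAt (fun y => Real.cos (P y t)) (-(t * Real.sin (P x t))) x := by
  have := (Real.hasDerivAt_cos (P x t)).comp x (hasDerivAt_P_x x t)
  exact this.congr_deriv (by ring)

lemma integrableOn_Ioi_const_div_sq (C T : ℝ) (hT : 0 < T) (hC : 0 ≤ C) :
    IntegrableOn (fun t => C / t ^ 2) (Ioi T) := by
  have key : ∀ t ∈ Ioi T, HasDerivAt (fun s : ℝ => -(C / s)) (C / t ^ 2) t := by
    intro t ht
    have htne : t ≠ 0 := ne_of_gt (lt_trans hT ht)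
    have := ((hasDerivAt_inv htne).const_mul C).neg
    simp [div_eq_mul_inv, mul_neg, neg_neg] at this ⊢
    exact this
  have hcont : ContinuousWithinAt (fun s : ℝ => -(C / s)) (Ici T) T := by
    have : (T:ℝ) ≠ 0 := ne_of_gt hT
    apply ContinuousAt.continuousWithinAt
    fun_prop (disch := assumption)
  have htend : Tendsto (fun s : ℝ => -(C / s)) atTop (𝓝 (-0)) :=
    (Tendsto.div_atTop tendsto_const_nhds tendsto_id).neg
  apply integrableOn_Ioi_deriv_of_nonneg hcont key (fun t ht => by positivity)
  simpa using htend

lemma dg_bound (x t : ℝ) (ht : 1 ≤ t) (h : t ^ 2 ≤ 2 * (t ^ 2 + x)) :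
    |dg x t| ≤ 40 / t ^ 2 := by
  have ht0 : (0:ℝ) < t := lt_of_lt_of_le one_pos ht
  have hpos : 0 < t ^ 2 + x := by nlinarith
  have hb1 : |2 * t ^ 2 * Real.cos (P x t) / (t ^ 2 + x) ^ 2| ≤ 8 / t ^ 2 := by
    rw [abs_div, abs_of_pos (by positivity : (0:ℝ) < (t ^ 2 + x) ^ 2)]
    rw [div_le_div_iff₀ (by positivity) (by positivity)]
    have hc : |Real.cos (P x t)| ≤ 1 := Real.abs_cos_le_one _
    have : |2 * t ^ 2 * Real.cos (P x t)| ≤ 2 * t ^ 2 := by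
      rw [abs_mul, abs_of_pos (by positivity : (0:ℝ) < 2 * t ^ 2)]
      nlinarith [abs_nonneg (Real.cos (P x t))]
    nlinarith [sq_nonneg (t ^ 2 + x), abs_nonneg (2 * t ^ 2 * Real.cos (P x t))]
  have hb2 : |4 * t * Real.sin (P x t) / (t ^ 2 + x) ^ 3| ≤ 32 / t ^ 2 := by
    rw [abs_div, abs_of_pos (by positivity : (0:ℝ) < (t ^ 2 + x) ^ 3)]
    rw [div_le_div_iff₀ (by positivity) (by positivity)]
    have hs : |Real.sin (P x t)| ≤ 1 := Real.abs_sin_le_one _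
    have h4 : |4 * t * Real.sin (P x t)| ≤ 4 * t := by
      rw [abs_mul, abs_of_pos (by positivity : (0:ℝ) < 4 * t)]
      nlinarith [abs_nonneg (Real.sin (P x t))]
    have hcube : t ^ 2 * t ^ 2 * t ^ 2 ≤ 8 * (t ^ 2 + x) ^ 3 := by
      nlinarith [pow_le_pow_left₀ (sq_nonneg t) h 3]
    have ht6 : 4 * t * t ^ 2 ≤ 4 * (t ^ 2 * t ^ 2 * t ^ 2) := by
      nlinarith [pow_le_pow_right₀ ht (by norm_num : 3 ≤ 6)]
    nlinarith [abs_nonneg (4 * t * Real.sin (P x t))]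
  calc |dg x t| ≤ |2 * t ^ 2 * Real.cos (P x t) / (t ^ 2 + x) ^ 2|
        + |4 * t * Real.sin (P x t) / (t ^ 2 + x) ^ 3| := abs_sub _ _
    _ ≤ 8 / t ^ 2 + 32 / t ^ 2 := add_le_add hb1 hb2
    _ = 40 / t ^ 2 := by ring

lemma contAt_dg_x (t x : ℝ) (h : t ^ 2 + x ≠ 0) : ContinuousAt (fun y => dg y t) x := by
  unfold dg
  have h2 : ((t:ℝ) ^ 2 + x) ^ 2 ≠ 0 := pow_ne_zero _ h
  have h3 : ((t:ℝ) ^ 2 + x) ^ 3 ≠ 0 := pow_ne_zero _ h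
  apply ContinuousAt.sub
  · exact ContinuousAt.div (by fun_prop) (by fun_prop) h2
  · exact ContinuousAt.div (by fun_prop) (by fun_prop) h3

lemma contOn_dg (x T : ℝ) (h : ∀ t, T ≤ t → 0 < t ^ 2 + x) :
    ContinuousOn (dg x) (Ici T) := by
  unfold dg
  apply ContinuousOn.sub
  · exact ContinuousOn.div (by fun_prop) (by fun_prop)
      (fun t ht => pow_ne_zero _ (ne_of_gt (h t ht)))
  · exact ContinuousOn.div (by fun_prop) (by fun_prop)
      (fun t ht => pow_ne_zero _ (ne_of_gt (h t ht)))

set_option maxHeartbeats 1000000 in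
/-- Local representation with derivative and continuity data around an arbitrary point. -/
lemma exists_local (x₀ : ℝ) : ∃ d : ℝ → ℝ,
    (∀ x ∈ Metric.ball x₀ 1, HasDerivAt Ai (d x) x) ∧ ContinuousAt d x₀ := by
  have hc2 : 2 ≤ |x₀| + 2 := by linarith [abs_nonneg x₀]
  set c : ℝ := |x₀| + 2 with hc_def
  set T : ℝ := Real.sqrt (2 * c) with hT_def
  have hT2 : T ^ 2 = 2 * c := Real.sq_sqrt (by linarith)
  have hT0 : 0 < T := Real.sqrt_pos.mpr (by linarith)
  have hT1 : 2 ≤ T := by nlinarith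
  have hball : ∀ x ∈ Metric.ball x₀ 1, |x| < c - 1 := by
    intro x hx
    rw [Metric.mem_ball, Real.dist_eq] at hx
    have h1 : |x| - |x₀| ≤ |x - x₀| := abs_sub_abs_le_abs_sub x x₀
    simp only [hc_def]
    linarith
  have ht1 : ∀ x ∈ Metric.ball x₀ 1, ∀ t, T ≤ t → t ^ 2 / 2 + 1 ≤ t ^ 2 + x := by
    intro x hx t ht
    have h1 := hball x hx
    have h2 : T ^ 2 ≤ t ^ 2 := by nlinarith
    have h3 := neg_abs_le x
    nlinarith
  have hpos : ∀ x ∈ Metric.ball x₀ 1, ∀ t, T ≤ t → 0 < t ^ 2 + x := by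
    intro x hx t ht
    have h1 := ht1 x hx t ht
    nlinarith [sq_nonneg t]
  have hx₀ : x₀ ∈ Metric.ball x₀ 1 := Metric.mem_ball_self one_pos
  -- the candidate derivative
  refine ⟨fun x => (1 / Real.pi) *
      ((∫ t in Ioc (0:ℝ) T, -(t * Real.sin (P x t)))
        - (T * Real.cos (P x T) * (T ^ 2 + x) - Real.sin (P x T)) / (T ^ 2 + x) ^ 2
        + ∫ t in Ioi T, dg x t), ?_, ?_⟩
  · -- HasDerivAt
    intro x hx
    -- representation on the ball
    have hrep : ∀ y ∈ Metric.ball x₀ 1, Ai y = (1 / Real.pi) *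
        ((∫ t in Ioc (0:ℝ) T, Real.cos (P y t))
          - Real.sin (P y T) / (T ^ 2 + y) + ∫ t in Ioi T, g y t) := by
      intro y hy
      have := Ai_eq y T hT0.le (hpos y hy)
      rwa [intervalIntegral.integral_of_le hT0.le] at this
    -- derivative of the compact piece
    have hDA : HasDerivAt (fun y => ∫ t in Ioc (0:ℝ) T, Real.cos (P y t))
        (∫ t in Ioc (0:ℝ) T, -(t * Real.sin (P x t))) x := by
      have := (hasDerivAt_integral_of_dominated_loc_of_deriv_le
        (μ := volume.restrict (Ioc (0:ℝ) T)) (x₀ := x)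
        (F := fun y t => Real.cos (P y t)) (F' := fun y t => -(t * Real.sin (P y t)))
        (bound := fun _ => T) (Metric.ball_mem_nhds x one_pos)
        (Eventually.of_forall fun y =>
          (Continuous.aestronglyMeasurable (by fun_prop)))
        (Continuous.integrableOn_Ioc (by fun_prop))
        (Continuous.aestronglyMeasurable (by fun_prop))
        ?_ ?_ ?_).2
      · exact this
      · filter_upwards [ae_restrict_mem measurableSet_Ioc] with t ht y _
        rw [Real.norm_eq_abs, abs_neg, abs_mul]
        calc |t| * |Real.sin (P y t)| ≤ |t| * 1 :=
              mul_le_mul_of_nonneg_left (Real.abs_sin_le_one _) (abs_nonneg t)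
          _ = |t| := mul_one _
          _ = t := abs_of_pos ht.1
          _ ≤ T := ht.2
      · rw [integrable_const_iff]
        right
        exact isFiniteMeasure_restrict.2 measure_Ioc_lt_top.ne
      · exact Eventually.of_forall fun t => fun y _ => hasDerivAt_cosP_x t y
    -- derivative of the boundary piece
    have hTx : (0:ℝ) < T ^ 2 + x := by
      have := hball x hx
      have := neg_abs_le x
      nlinarith
    have hDB : HasDerivAt (fun y => Real.sin (P y T) / (T ^ 2 + y))
        ((T * Real.cos (P x T) * (T ^ 2 + x) - Real.sin (P x T)) / (T ^ 2 + x) ^ 2) x := by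
      have hu : HasDerivAt (fun y => Real.sin (P y T)) (Real.cos (P x T) * T) x :=
        (Real.hasDerivAt_sin _).comp x (hasDerivAt_P_x x T)
      have hv : HasDerivAt (fun y : ℝ => T ^ 2 + y) 1 x := (hasDerivAt_id x).const_add _
      have := hu.div hv (ne_of_gt hTx)
      refine this.congr_deriv ?_
      ring
    -- derivative of the tail piece
    have hDC : HasDerivAt (fun y => ∫ t in Ioi T, g y t) (∫ t in Ioi T, dg x t) x := by
      have hε : 0 < 1 - dist x x₀ := by
        rw [Metric.mem_ball] at hx; linarith
      have hsub : Metric.ball x (1 - dist x x₀) ⊆ Metric.ball x₀ 1 :=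
        Metric.ball_subset_ball' (by linarith)
      have := (hasDerivAt_integral_of_dominated_loc_of_deriv_le
        (μ := volume.restrict (Ioi T)) (x₀ := x)
        (F := fun y t => g y t) (F' := fun y t => dg y t)
        (bound := fun t => 40 / t ^ 2) (Metric.ball_mem_nhds x hε)
        ?_ (g_integrableOn x T hT0.le (hpos x hx))
        (((contOn_dg x T (hpos x hx)).mono Ioi_subset_Ici_self).aestronglyMeasurable
          measurableSet_Ioi)
        ?_ (integrableOn_Ioi_const_div_sq 40 T hT0 (by norm_num)) ?_).2
      · exact this
      · filter_upwards [Metric.isOpen_ball.mem_nhds hx] with y hy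
        exact ((contOn_g y T (hpos y hy)).mono Ioi_subset_Ici_self).aestronglyMeasurable
          measurableSet_Ioi
      · filter_upwards [ae_restrict_mem measurableSet_Ioi] with t ht y hy
        have hy' := hsub hy
        have h1 := ht1 y hy' t (le_of_lt ht)
        rw [Real.norm_eq_abs]
        exact dg_bound y t (by nlinarith [le_of_lt (mem_Ioi.mp ht)]) (by linarith)
      · filter_upwards [ae_restrict_mem measurableSet_Ioi] with t ht y hy
        exact hasDerivAt_g_x t y (ne_of_gt (hpos y (hsub hy) t (le_of_lt ht)))
    have hsum := ((hDA.sub hDB).add hDC).const_mul (1 / Real.pi)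
    apply hsum.congr_of_eventuallyEq
    exact Filter.eventuallyEq_of_mem (Metric.isOpen_ball.mem_nhds hx) hrep
  · -- continuity of the candidate derivative at x₀
    apply ContinuousAt.mul continuousAt_const
    apply ContinuousAt.add
    apply ContinuousAt.sub
    · -- compact piece
      have : Tendsto (fun x => ∫ t in Ioc (0:ℝ) T, -(t * Real.sin (P x t))) (𝓝 x₀)
          (𝓝 (∫ t in Ioc (0:ℝ) T, -(t * Real.sin (P x₀ t)))) := by
        apply tendsto_integral_filter_of_dominated_convergence (bound := fun _ => T)
        · exact Eventually.of_forall fun y =>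
            (Continuous.aestronglyMeasurable (by fun_prop))
        · apply Eventually.of_forall
          intro y
          filter_upwards [ae_restrict_mem measurableSet_Ioc] with t ht
          rw [Real.norm_eq_abs, abs_neg, abs_mul]
          calc |t| * |Real.sin (P y t)| ≤ |t| * 1 :=
                mul_le_mul_of_nonneg_left (Real.abs_sin_le_one _) (abs_nonneg t)
            _ = |t| := mul_one _
            _ = t := abs_of_pos ht.1
            _ ≤ T := ht.2
        · rw [integrable_const_iff]
          right
          exact isFiniteMeasure_restrict.2 measure_Ioc_lt_top.ne
        · exact Eventually.of_forall fun t =>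
            Continuous.tendsto (by fun_prop) x₀
      exact this
    · -- boundary piece
      have hTx : (0:ℝ) < T ^ 2 + x₀ := by
        have := hball x₀ hx₀
        have := neg_abs_le x₀
        nlinarith
      exact ContinuousAt.div (by fun_prop) (by fun_prop) (pow_ne_zero _ (ne_of_gt hTx))
    · -- tail piece
      have : Tendsto (fun x => ∫ t in Ioi T, dg x t) (𝓝 x₀)
          (𝓝 (∫ t in Ioi T, dg x₀ t)) := by
        apply tendsto_integral_filter_of_dominated_convergence (bound := fun t => 40 / t ^ 2)
        · filter_upwards [Metric.isOpen_ball.mem_nhds hx₀] with y hy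
          exact ((contOn_dg y T (hpos y hy)).mono Ioi_subset_Ici_self).aestronglyMeasurable
            measurableSet_Ioi
        · filter_upwards [Metric.isOpen_ball.mem_nhds hx₀] with y hy
          filter_upwards [ae_restrict_mem measurableSet_Ioi] with t ht
          have h1 := ht1 y hy t (le_of_lt ht)
          rw [Real.norm_eq_abs]
          exact dg_bound y t (by nlinarith [le_of_lt (mem_Ioi.mp ht)]) (by linarith)
        · exact integrableOn_Ioi_const_div_sq 40 T hT0 (by norm_num)
        · filter_upwards [ae_restrict_mem measurableSet_Ioi] with t ht
          exact contAt_dg_x t x₀ (ne_of_gt (hpos x₀ hx₀ t (le_of_lt ht)))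
      exact this

lemma Ai_differentiable : Differentiable ℝ Ai := by
  intro x₀
  obtain ⟨d, hd, -⟩ := exists_local x₀
  exact (hd x₀ (Metric.mem_ball_self one_pos)).differentiableAt

lemma deriv_Ai_continuous : Continuous (deriv Ai) := by
  rw [continuous_iff_continuousAt]
  intro x₀
  obtain ⟨d, hd, hcont⟩ := exists_local x₀
  apply hcont.congr
  filter_upwards [Metric.isOpen_ball.mem_nhds (Metric.mem_ball_self one_pos)] with y hy
  exact ((hd y hy).deriv).symm

/-- Integrand after the second integration by parts. -/
def v (x t : ℝ) : ℝ := (2 / (t ^ 2 + x) ^ 3 - 12 * t ^ 2 / (t ^ 2 + x) ^ 4) * Real.cos (P x t)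

/-- `x`-derivative of `v x t`. -/
def dvf (x t : ℝ) : ℝ :=
  (-6 / (t ^ 2 + x) ^ 4 + 48 * t ^ 2 / (t ^ 2 + x) ^ 5) * Real.cos (P x t)
    - (2 / (t ^ 2 + x) ^ 3 - 12 * t ^ 2 / (t ^ 2 + x) ^ 4) * (t * Real.sin (P x t))

lemma hasDerivAt_h2 (x t : ℝ) (h : t ^ 2 + x ≠ 0) :
    HasDerivAt (fun s => -2 * s * Real.cos (P x s) / (s ^ 2 + x) ^ 3)
      (g x t - v x t) t := by
  have hu : HasDerivAt (fun s => -2 * s * Real.cos (P x s))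
      (-2 * Real.cos (P x t) + -2 * t * (-Real.sin (P x t) * (t ^ 2 + x))) t := by
    have h1 : HasDerivAt (fun s : ℝ => -2 * s) (-2 : ℝ) t := by
      simpa using (hasDerivAt_id t).const_mul (-2 : ℝ)
    have h2 : HasDerivAt (fun s => Real.cos (P x s)) (-Real.sin (P x t) * (t ^ 2 + x)) t :=
      (Real.hasDerivAt_cos (P x t)).comp t (hasDerivAt_P_t x t)
    exact (h1.mul h2).congr_deriv (by ring)
  have hv : HasDerivAt (fun s : ℝ => (s ^ 2 + x) ^ 3) (3 * (t ^ 2 + x) ^ 2 * (2 * t)) t := by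
    have hb : HasDerivAt (fun s : ℝ => s ^ 2 + x) (2 * t) t := by
      simpa using (hasDerivAt_pow 2 t).add_const x
    have h3 := hb.pow 3
    simp at h3
    exact h3
  have := hu.div hv (pow_ne_zero 3 h)
  refine this.congr_deriv ?_
  unfold g v
  field_simp
  ring

lemma hasDerivAt_v_x (t x : ℝ) (h : t ^ 2 + x ≠ 0) :
    HasDerivAt (fun y => v y t) (dvf x t) x := by
  have hden : ∀ n : ℕ, HasDerivAt (fun y : ℝ => (t ^ 2 + y) ^ n)
      (n * (t ^ 2 + x) ^ (n - 1) * 1) x := fun n => ((hasDerivAt_id x).const_add _).pow n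
  have c1 : HasDerivAt (fun y : ℝ => 2 / (t ^ 2 + y) ^ 3)
      ((0 * (t ^ 2 + x) ^ 3 - 2 * ((3:ℕ) * (t ^ 2 + x) ^ (3 - 1) * 1)) / ((t ^ 2 + x) ^ 3) ^ 2)
      x := (hasDerivAt_const x 2).div (hden 3) (pow_ne_zero 3 h)
  have c2 : HasDerivAt (fun y : ℝ => 12 * t ^ 2 / (t ^ 2 + y) ^ 4)
      ((0 * (t ^ 2 + x) ^ 4 - 12 * t ^ 2 * ((4:ℕ) * (t ^ 2 + x) ^ (4 - 1) * 1))
        / ((t ^ 2 + x) ^ 4) ^ 2) x :=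
    (hasDerivAt_const x (12 * t ^ 2)).div (hden 4) (pow_ne_zero 4 h)
  have c3 : HasDerivAt (fun y => Real.cos (P y t)) (-(t * Real.sin (P x t))) x :=
    hasDerivAt_cosP_x t x
  have := (c1.sub c2).mul c3
  refine this.congr_deriv ?_
  unfold dvf
  simp only [Pi.sub_apply]
  field_simp
  ring

lemma v_bound (x t : ℝ) (hx : 0 < x) : |v x t| ≤ 14 / (t ^ 2 + x) ^ 3 := by
  have hq : 0 < t ^ 2 + x := by positivity
  have h1 : |2 / (t ^ 2 + x) ^ 3 - 12 * t ^ 2 / (t ^ 2 + x) ^ 4|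
      ≤ 2 / (t ^ 2 + x) ^ 3 + 12 * t ^ 2 / (t ^ 2 + x) ^ 4 := by
    refine (abs_sub _ _).trans ?_
    rw [abs_of_pos (by positivity), abs_of_nonneg (by positivity)]
  have h2 : 12 * t ^ 2 / (t ^ 2 + x) ^ 4 ≤ 12 / (t ^ 2 + x) ^ 3 := by
    rw [div_le_div_iff₀ (by positivity) (by positivity)]
    nlinarith [sq_nonneg t, pow_pos hq 3, sq_nonneg (t^2+x)]
  calc |v x t| = |2 / (t ^ 2 + x) ^ 3 - 12 * t ^ 2 / (t ^ 2 + x) ^ 4| * |Real.cos (P x t)| := by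
        rw [v, abs_mul]
    _ ≤ (2 / (t ^ 2 + x) ^ 3 + 12 * t ^ 2 / (t ^ 2 + x) ^ 4) * 1 :=
        mul_le_mul h1 (Real.abs_cos_le_one _) (abs_nonneg _) (by positivity)
    _ = 2 / (t ^ 2 + x) ^ 3 + 12 * t ^ 2 / (t ^ 2 + x) ^ 4 := mul_one _
    _ ≤ 2 / (t ^ 2 + x) ^ 3 + 12 / (t ^ 2 + x) ^ 3 := by linarith
    _ = 14 / (t ^ 2 + x) ^ 3 := by ring
  
lemma dvf_bound (x t : ℝ) (ht : 0 ≤ t) (hx : 1 / 2 ≤ x) : |dvf x t| ≤ 230 / (t ^ 2 + x) ^ 2 := by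
  have hq : 0 < t ^ 2 + x := by positivity
  have ht2 : t ^ 2 ≤ t ^ 2 + x := by linarith
  have htq : t ≤ t ^ 2 + x := by nlinarith [sq_nonneg (t - 1/2)]
  have hq2 : 1 / 2 ≤ t ^ 2 + x := by nlinarith [sq_nonneg t]
  have h1 : |(-6 / (t ^ 2 + x) ^ 4 + 48 * t ^ 2 / (t ^ 2 + x) ^ 5) * Real.cos (P x t)|
      ≤ 6 / (t ^ 2 + x) ^ 4 + 48 * t ^ 2 / (t ^ 2 + x) ^ 5 := by
    rw [abs_mul]
    refine (mul_le_mul (abs_add_le _ _) (Real.abs_cos_le_one _) (abs_nonneg _)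
      (by positivity)).trans ?_
    rw [mul_one, abs_div, abs_neg, abs_of_pos (by positivity : (0:ℝ) < (6:ℝ)),
      abs_of_pos (by positivity : (0:ℝ) < (t ^ 2 + x) ^ 4),
      abs_of_nonneg (by positivity : (0:ℝ) ≤ 48 * t ^ 2 / (t ^ 2 + x) ^ 5)]
  have h2 : |(2 / (t ^ 2 + x) ^ 3 - 12 * t ^ 2 / (t ^ 2 + x) ^ 4) * (t * Real.sin (P x t))|
      ≤ (2 / (t ^ 2 + x) ^ 3 + 12 * t ^ 2 / (t ^ 2 + x) ^ 4) * t := by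
    rw [abs_mul]
    apply mul_le_mul
    · refine (abs_sub _ _).trans ?_
      rw [abs_of_pos (by positivity), abs_of_nonneg (by positivity)]
    · rw [abs_mul, abs_of_nonneg ht]
      calc t * |Real.sin (P x t)| ≤ t * 1 :=
            mul_le_mul_of_nonneg_left (Real.abs_sin_le_one _) ht
        _ = t := mul_one t
    · exact abs_nonneg _
    · positivity
  have key : 6 / (t ^ 2 + x) ^ 4 + 48 * t ^ 2 / (t ^ 2 + x) ^ 5
      + (2 / (t ^ 2 + x) ^ 3 + 12 * t ^ 2 / (t ^ 2 + x) ^ 4) * t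
      ≤ 230 / (t ^ 2 + x) ^ 2 := by
    have hq2sq : 1 / 4 ≤ (t ^ 2 + x) ^ 2 := by nlinarith
    have e1 : 6 / (t ^ 2 + x) ^ 4 ≤ 24 / (t ^ 2 + x) ^ 2 := by
      rw [div_le_div_iff₀ (by positivity) (by positivity)]
      nlinarith [mul_le_mul_of_nonneg_left hq2sq (le_of_lt (pow_pos hq 2))]
    have e2 : 48 * t ^ 2 / (t ^ 2 + x) ^ 5 ≤ 192 / (t ^ 2 + x) ^ 2 := by
      rw [div_le_div_iff₀ (by positivity) (by positivity)]
      nlinarith [mul_le_mul_of_nonneg_right ht2 (le_of_lt (pow_pos hq 2)),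
        mul_le_mul_of_nonneg_left hq2sq (le_of_lt (pow_pos hq 3))]
    have e3 : (2 / (t ^ 2 + x) ^ 3 + 12 * t ^ 2 / (t ^ 2 + x) ^ 4) * t
        ≤ 14 / (t ^ 2 + x) ^ 2 := by
      have f1 : 2 / (t ^ 2 + x) ^ 3 * t ≤ 2 / (t ^ 2 + x) ^ 2 := by
        rw [div_mul_eq_mul_div, div_le_div_iff₀ (by positivity) (by positivity)]
        nlinarith [mul_le_mul_of_nonneg_right htq (le_of_lt (pow_pos hq 2))]
      have f2 : 12 * t ^ 2 / (t ^ 2 + x) ^ 4 * t ≤ 12 / (t ^ 2 + x) ^ 2 := by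
        rw [div_mul_eq_mul_div, div_le_div_iff₀ (by positivity) (by positivity)]
        have g1 : t ^ 2 * t ≤ (t ^ 2 + x) * (t ^ 2 + x) := by nlinarith
        nlinarith [mul_le_mul_of_nonneg_right g1 (le_of_lt (pow_pos hq 2))]
      calc (2 / (t ^ 2 + x) ^ 3 + 12 * t ^ 2 / (t ^ 2 + x) ^ 4) * t
          = 2 / (t ^ 2 + x) ^ 3 * t + 12 * t ^ 2 / (t ^ 2 + x) ^ 4 * t := by ring
        _ ≤ 2 / (t ^ 2 + x) ^ 2 + 12 / (t ^ 2 + x) ^ 2 := add_le_add f1 f2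
        _ = 14 / (t ^ 2 + x) ^ 2 := by ring
    have esum : (24:ℝ) / (t ^ 2 + x) ^ 2 + 192 / (t ^ 2 + x) ^ 2 + 14 / (t ^ 2 + x) ^ 2
        = 230 / (t ^ 2 + x) ^ 2 := by ring
    linarith
  calc |dvf x t| ≤ |(-6 / (t ^ 2 + x) ^ 4 + 48 * t ^ 2 / (t ^ 2 + x) ^ 5) * Real.cos (P x t)|
        + |(2 / (t ^ 2 + x) ^ 3 - 12 * t ^ 2 / (t ^ 2 + x) ^ 4) * (t * Real.sin (P x t))| :=
      abs_sub _ _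
    _ ≤ 6 / (t ^ 2 + x) ^ 4 + 48 * t ^ 2 / (t ^ 2 + x) ^ 5
        + (2 / (t ^ 2 + x) ^ 3 + 12 * t ^ 2 / (t ^ 2 + x) ^ 4) * t := by linarith
    _ ≤ 230 / (t ^ 2 + x) ^ 2 := key

lemma contOn_v (x : ℝ) (hx : 0 < x) : Continuous (v x) := by
  have hne : ∀ t : ℝ, (t ^ 2 + x) ≠ 0 := fun t => by positivity
  unfold v
  apply Continuous.mul ?_ (by fun_prop)
  apply Continuous.sub
  · exact continuous_const.div (by fun_prop) fun t => pow_ne_zero _ (hne t)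
  · exact Continuous.div (by fun_prop) (by fun_prop) fun t => pow_ne_zero _ (hne t)

lemma contOn_dvf (x : ℝ) (hx : 0 < x) : Continuous (dvf x) := by
  have hne : ∀ t : ℝ, (t ^ 2 + x) ≠ 0 := fun t => by positivity
  unfold dvf
  apply Continuous.sub
  · apply Continuous.mul ?_ (by fun_prop)
    apply Continuous.add
    · exact Continuous.div (by fun_prop) (by fun_prop) fun t => pow_ne_zero _ (hne t)
    · exact Continuous.div (by fun_prop) (by fun_prop) fun t => pow_ne_zero _ (hne t)
  · apply Continuous.mul ?_ (by fun_prop)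
    apply Continuous.sub
    · exact continuous_const.div (by fun_prop) fun t => pow_ne_zero _ (hne t)
    · exact Continuous.div (by fun_prop) (by fun_prop) fun t => pow_ne_zero _ (hne t)

lemma inv_one_add_sq_integrable : IntegrableOn (fun t : ℝ => (1 + t ^ 2)⁻¹) (Ioi 0) :=
  integrable_inv_one_add_sq.integrableOn

lemma div_le_mul_inv {C c t q : ℝ} (hq : 0 < q) (h : c * (1 + t ^ 2) ≤ C * q) :
    c / q ≤ C * (1 + t ^ 2)⁻¹ := by
  have h0 : (0:ℝ) < 1 + t ^ 2 := by positivity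
  rw [← div_eq_mul_inv, div_le_div_iff₀ hq h0]
  linarith

lemma v_le_chain (x t : ℝ) (hx : 1 / 2 ≤ x) :
    14 / (t ^ 2 + x) ^ 3 ≤ 112 * (1 + t ^ 2)⁻¹ := by
  have hq : 0 < t ^ 2 + x := by positivity
  apply div_le_mul_inv (by positivity)
  have h1 : 1 + t ^ 2 ≤ 2 * (t ^ 2 + x) := by nlinarith [sq_nonneg t]
  have h2 : 1 / 4 ≤ (t ^ 2 + x) ^ 2 := by nlinarith [sq_nonneg t]
  nlinarith [mul_le_mul_of_nonneg_left h2 (le_of_lt hq), pow_pos hq 3]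

lemma v_integrableOn (x : ℝ) (hx : 1 / 2 < x) : IntegrableOn (v x) (Ioi 0) := by
  apply Integrable.mono' ((inv_one_add_sq_integrable.const_mul 112))
  · exact (contOn_v x (by linarith)).aestronglyMeasurable
  · filter_upwards [] with t
    rw [Real.norm_eq_abs]
    exact (v_bound x t (by linarith)).trans (v_le_chain x t (le_of_lt hx))

lemma g_v_sub_integrableOn (x : ℝ) (hx : 1 / 2 < x) :
    IntegrableOn (fun t => g x t - v x t) (Ioi 0) :=
  (g_integrableOn x 0 le_rfl (fun t _ => by positivity)).sub (v_integrableOn x hx)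

lemma rep_half (x : ℝ) (hx : 1 / 2 < x) :
    Ai x = (1 / Real.pi) * ∫ t in Ioi (0:ℝ), v x t := by
  have hx0 : (0:ℝ) < x := by linarith
  have hpos : ∀ t, (0:ℝ) ≤ t → 0 < t ^ 2 + x := fun t _ => by positivity
  have h1 := Ai_eq x 0 le_rfl hpos
  rw [intervalIntegral.integral_same] at h1
  have hP0 : P x 0 = 0 := by unfold P; ring
  rw [hP0, Real.sin_zero] at h1
  simp only [zero_div, sub_zero, zero_add] at h1
  -- second integration by parts: ∫ (g - v) = 0
  have key : ∫ t in Ioi (0:ℝ), (g x t - v x t) = 0 := by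
    have hcont : ContinuousWithinAt (fun s => -2 * s * Real.cos (P x s) / (s ^ 2 + x) ^ 3)
        (Ici 0) 0 := by
      apply ContinuousAt.continuousWithinAt
      have : ((0:ℝ) ^ 2 + x) ^ 3 ≠ 0 := by positivity
      exact ContinuousAt.div (by fun_prop) (by fun_prop) this
    have hderiv : ∀ t ∈ Ioi (0:ℝ), HasDerivAt
        (fun s => -2 * s * Real.cos (P x s) / (s ^ 2 + x) ^ 3) (g x t - v x t) t :=
      fun t ht => hasDerivAt_h2 x t (ne_of_gt (hpos t (le_of_lt ht)))
    have htend : Tendsto (fun s : ℝ => -2 * s * Real.cos (P x s) / (s ^ 2 + x) ^ 3)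
        atTop (𝓝 0) := by
      refine squeeze_zero_norm' (a := fun s : ℝ => 2 / s ^ 5) ?_ ?_
      · filter_upwards [eventually_ge_atTop (1:ℝ)] with s hs
        have hs0 : (0:ℝ) < s := by linarith
        have hq : 0 < s ^ 2 + x := by positivity
        rw [Real.norm_eq_abs, abs_div, abs_of_pos (by positivity : (0:ℝ) < (s ^ 2 + x) ^ 3)]
        rw [div_le_div_iff₀ (by positivity) (by positivity)]
        have hc : |Real.cos (P x s)| ≤ 1 := Real.abs_cos_le_one _
        have habs : |(-2 : ℝ) * s * Real.cos (P x s)| ≤ 2 * s := by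
          rw [abs_mul, abs_mul, abs_neg, abs_of_pos (by norm_num : (0:ℝ) < 2),
            abs_of_pos hs0]
          nlinarith [abs_nonneg (Real.cos (P x s))]
        have hpow : s ^ 2 ≤ s ^ 2 + x := by linarith
        have hcube : (s ^ 2) ^ 3 ≤ (s ^ 2 + x) ^ 3 := by
          apply pow_le_pow_left₀ (by positivity) hpow
        calc |(-2 : ℝ) * s * Real.cos (P x s)| * s ^ 5 ≤ 2 * s * s ^ 5 := by
              nlinarith [pow_pos hs0 5]
          _ = 2 * (s ^ 2) ^ 3 := by ring
          _ ≤ 2 * (s ^ 2 + x) ^ 3 := by linarith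
      · apply Tendsto.div_atTop tendsto_const_nhds
        exact tendsto_pow_atTop (by norm_num)
    have := integral_Ioi_of_hasDerivAt_of_tendsto hcont hderiv
      (g_v_sub_integrableOn x hx) htend
    rw [this]
    norm_num
  have hsplit : ∫ t in Ioi (0:ℝ), g x t = ∫ t in Ioi (0:ℝ), v x t := by
    have := integral_sub (g_integrableOn x 0 le_rfl (fun t _ => by positivity))
      (v_integrableOn x hx)
    rw [key] at this
    linarith [this]
  rw [h1, hsplit]

set_option maxHeartbeats 1000000 in
lemma deriv_Ai_rep (x : ℝ) (hx : 1 / 2 < x) :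
    deriv Ai x = (1 / Real.pi) * ∫ t in Ioi (0:ℝ), dvf x t := by
  have hε : 0 < x - 1 / 2 := by linarith
  have hsub : Metric.ball x (x - 1 / 2) ⊆ Ioi (1/2 : ℝ) := by
    intro y hy
    rw [Metric.mem_ball, Real.dist_eq, abs_sub_lt_iff] at hy
    rw [mem_Ioi]
    linarith [hy.2]
  have hD : HasDerivAt (fun y => ∫ t in Ioi (0:ℝ), v y t)
      (∫ t in Ioi (0:ℝ), dvf x t) x := by
    have := (hasDerivAt_integral_of_dominated_loc_of_deriv_le
      (μ := volume.restrict (Ioi (0:ℝ))) (x₀ := x)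
      (F := fun y t => v y t) (F' := fun y t => dvf y t)
      (bound := fun t => 920 * (1 + t ^ 2)⁻¹) (Metric.ball_mem_nhds x hε)
      ?_ (v_integrableOn x hx)
      ((contOn_dvf x (by linarith)).aestronglyMeasurable)
      ?_ ((inv_one_add_sq_integrable.const_mul 920)) ?_).2
    · exact this
    · filter_upwards [Metric.ball_mem_nhds x hε] with y hy
      have := hsub hy
      rw [mem_Ioi] at this
      exact (contOn_v y (by linarith)).aestronglyMeasurable
    · filter_upwards [ae_restrict_mem measurableSet_Ioi] with t ht y hy
      have hy' := hsub hy
      rw [mem_Ioi] at hy'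
      rw [Real.norm_eq_abs]
      refine (dvf_bound y t (le_of_lt ht) (le_of_lt hy')).trans ?_
      have hq : 0 < t ^ 2 + y := by positivity
      apply div_le_mul_inv (by positivity)
      have h1 : 1 + t ^ 2 ≤ 2 * (t ^ 2 + y) := by nlinarith [sq_nonneg t]
      nlinarith [mul_le_mul_of_nonneg_left h1 (by positivity : (0:ℝ) ≤ 230 * (t ^ 2 + y)),
        pow_pos hq 2]
    · filter_upwards [ae_restrict_mem measurableSet_Ioi] with t ht y hy
      have hy' := hsub hy
      rw [mem_Ioi] at hy'
      exact hasDerivAt_v_x t y (by positivity)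
  have hDR := hD.const_mul (1 / Real.pi)
  have heq : Ai =ᶠ[𝓝 x] fun y => (1 / Real.pi) * ∫ t in Ioi (0:ℝ), v y t := by
    filter_upwards [isOpen_Ioi.mem_nhds (mem_Ioi.mpr hx)] with y hy
    exact rep_half y (mem_Ioi.mp hy)
  exact ((hDR.congr_of_eventuallyEq heq).deriv)

/-- The (finite) value of `∫₀^∞ (1+t²)⁻¹`. -/
def I0 : ℝ := ∫ t in Ioi (0:ℝ), (1 + t ^ 2)⁻¹

lemma I0_nonneg : 0 ≤ I0 :=
  integral_nonneg fun t => by positivity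

lemma Ai_decay (x : ℝ) (hx : 1 ≤ x) : |Ai x| ≤ (14 * I0 / Real.pi) / x ^ 2 := by
  rw [rep_half x (by linarith)]
  have hb : ∀ t ∈ Ioi (0:ℝ), ‖v x t‖ ≤ 14 / x ^ 2 * (1 + t ^ 2)⁻¹ := by
    intro t ht
    rw [Real.norm_eq_abs]
    refine (v_bound x t (by linarith)).trans ?_
    have hq : 0 < t ^ 2 + x := by positivity
    have h1 : 1 + t ^ 2 ≤ t ^ 2 + x := by linarith
    apply div_le_mul_inv (by positivity)
    rw [div_mul_eq_mul_div, le_div_iff₀ (by positivity : (0:ℝ) < x ^ 2)]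
    nlinarith [mul_le_mul (pow_le_pow_left₀ (by positivity : (0:ℝ) ≤ x)
      (by nlinarith [sq_nonneg t] : x ≤ t ^ 2 + x) 2) h1 (by positivity) (by positivity),
      pow_pos hq 3]
  have habs : ‖∫ t in Ioi (0:ℝ), v x t‖ ≤ ∫ t in Ioi (0:ℝ), 14 / x ^ 2 * (1 + t ^ 2)⁻¹ := by
    apply norm_integral_le_of_norm_le (inv_one_add_sq_integrable.const_mul (14 / x ^ 2))
    filter_upwards [ae_restrict_mem measurableSet_Ioi] with t ht
    exact hb t ht
  rw [integral_const_mul] at habs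
  rw [abs_mul, abs_of_pos (by positivity : (0:ℝ) < 1 / Real.pi)]
  rw [← Real.norm_eq_abs]
  calc 1 / Real.pi * ‖∫ t in Ioi (0:ℝ), v x t‖ ≤ 1 / Real.pi * (14 / x ^ 2 * I0) := by
        apply mul_le_mul_of_nonneg_left _ (by positivity)
        exact habs
    _ = 14 * I0 / Real.pi / x ^ 2 := by field_simp

lemma deriv_Ai_decay (x : ℝ) (hx : 1 ≤ x) : |deriv Ai x| ≤ (230 * I0 / Real.pi) / x := by
  rw [deriv_Ai_rep x (by linarith)]
  have hb : ∀ t ∈ Ioi (0:ℝ), ‖dvf x t‖ ≤ 230 / x * (1 + t ^ 2)⁻¹ := by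
    intro t ht
    rw [Real.norm_eq_abs]
    refine (dvf_bound x t (le_of_lt ht) (by linarith)).trans ?_
    have hq : 0 < t ^ 2 + x := by positivity
    have h1 : 1 + t ^ 2 ≤ t ^ 2 + x := by linarith
    apply div_le_mul_inv (by positivity)
    rw [div_mul_eq_mul_div, le_div_iff₀ (by positivity : (0:ℝ) < x)]
    nlinarith [mul_le_mul (by nlinarith [sq_nonneg t] : x ≤ t ^ 2 + x) h1
      (by positivity) (by positivity)]
  have habs : ‖∫ t in Ioi (0:ℝ), dvf x t‖ ≤ ∫ t in Ioi (0:ℝ), 230 / x * (1 + t ^ 2)⁻¹ := by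
    apply norm_integral_le_of_norm_le (inv_one_add_sq_integrable.const_mul (230 / x))
    filter_upwards [ae_restrict_mem measurableSet_Ioi] with t ht
    exact hb t ht
  rw [integral_const_mul] at habs
  rw [abs_mul, abs_of_pos (by positivity : (0:ℝ) < 1 / Real.pi)]
  rw [← Real.norm_eq_abs]
  calc 1 / Real.pi * ‖∫ t in Ioi (0:ℝ), dvf x t‖ ≤ 1 / Real.pi * (230 / x * I0) := by
        apply mul_le_mul_of_nonneg_left _ (by positivity)
        exact habs
    _ = 230 * I0 / Real.pi / x := by field_simp

lemma K1_nonneg : 0 ≤ 14 * I0 / Real.pi :=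
  div_nonneg (by nlinarith [I0_nonneg]) Real.pi_pos.le

lemma K2_nonneg : 0 ≤ 230 * I0 / Real.pi :=
  div_nonneg (by nlinarith [I0_nonneg]) Real.pi_pos.le

lemma shift_le (x c : ℝ) (h2 : 1 ≤ x + c) : x ≤ (1 + |c|) * (x + c) := by
  nlinarith [mul_nonneg (abs_nonneg c) (by linarith : (0:ℝ) ≤ x + c - 1),
    le_abs_self c, neg_abs_le c]

lemma shifted_decay_Ai (x c : ℝ) (h1 : 1 ≤ x) (h2 : 1 ≤ x + c) :
    |Ai (x + c)| ≤ 14 * I0 / Real.pi * (1 + |c|) ^ 2 / x ^ 2 := by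
  refine (Ai_decay (x + c) h2).trans ?_
  have hsq : x ^ 2 ≤ (1 + |c|) ^ 2 * (x + c) ^ 2 := by
    nlinarith [mul_le_mul (shift_le x c h2) (shift_le x c h2) (by linarith)
      (mul_nonneg (by positivity) (by linarith))]
  rw [div_le_div_iff₀ (by positivity) (by positivity)]
  nlinarith [mul_le_mul_of_nonneg_left hsq K1_nonneg]

lemma shifted_decay_Ai' (x c : ℝ) (h2 : 1 ≤ x + c) :
    |Ai (x + c)| ≤ 14 * I0 / Real.pi * (1 + |c|) ^ 2 := by
  refine (Ai_decay (x + c) h2).trans ?_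
  have h3 : 1 ≤ (x + c) ^ 2 := by nlinarith
  have h4 : 1 ≤ (1 + |c|) ^ 2 := by nlinarith [abs_nonneg c]
  rw [div_le_iff₀ (by positivity)]
  nlinarith [K1_nonneg, mul_le_mul_of_nonneg_left h3 K1_nonneg,
    mul_le_mul_of_nonneg_left h4 (mul_nonneg K1_nonneg (by positivity : (0:ℝ) ≤ (x+c)^2))]

lemma shifted_decay_deriv (x c : ℝ) (h1 : 1 ≤ x) (h2 : 1 ≤ x + c) :
    |deriv Ai (x + c)| ≤ 230 * I0 / Real.pi * (1 + |c|) / x := by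
  refine (deriv_Ai_decay (x + c) h2).trans ?_
  rw [div_le_div_iff₀ (by linarith) (by linarith)]
  nlinarith [mul_le_mul_of_nonneg_left (shift_le x c h2) K2_nonneg]

lemma aux_int (f : ℝ → ℝ) (M C : ℝ) (hM : 0 < M) (hC : 0 ≤ C) (hf : Continuous f)
    (hb : ∀ x, M < x → |f x| ≤ C / x ^ 2) : IntegrableOn f (Ioi 0) := by
  rw [← Ioc_union_Ioi_eq_Ioi (le_of_lt hM)]
  apply IntegrableOn.union
  · exact hf.integrableOn_Ioc
  · apply Integrable.mono' (integrableOn_Ioi_const_div_sq C M hM hC)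
      hf.aestronglyMeasurable.restrict
    filter_upwards [ae_restrict_mem measurableSet_Ioi] with x hx
    exact hb x hx

end AiryAux

end

open AiryAux

set_option maxHeartbeats 1000000

/-- For all real `a` and `b`, the integrals `∫₀^∞ x·Ai'(x+a)·Ai(x+b) dx`,
`∫₀^∞ x·Ai(x+a)·Ai'(x+b) dx` and `∫₀^∞ Ai(x+a)·Ai(x+b) dx` converge absolutely and their sum
vanishes. -/
theorem airy_integration_by_parts_identity (a b : ℝ) :
    MeasureTheory.IntegrableOn (fun x : ℝ => x * deriv Ai (x + a) * Ai (x + b)) (Set.Ioi 0) ∧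
    MeasureTheory.IntegrableOn (fun x : ℝ => x * Ai (x + a) * deriv Ai (x + b)) (Set.Ioi 0) ∧
    MeasureTheory.IntegrableOn (fun x : ℝ => Ai (x + a) * Ai (x + b)) (Set.Ioi 0) ∧
    (∫ x in Set.Ioi (0:ℝ), x * deriv Ai (x + a) * Ai (x + b))
      + (∫ x in Set.Ioi (0:ℝ), x * Ai (x + a) * deriv Ai (x + b))
      + (∫ x in Set.Ioi (0:ℝ), Ai (x + a) * Ai (x + b)) = 0 := by
  have hAi_cont : Continuous Ai := Ai_differentiable.continuous
  have hd_cont : Continuous (deriv Ai) := deriv_Ai_continuous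
  set K1 : ℝ := 14 * I0 / Real.pi with hK1_def
  set K2 : ℝ := 230 * I0 / Real.pi with hK2_def
  have hK1 : 0 ≤ K1 := K1_nonneg
  have hK2 : 0 ≤ K2 := K2_nonneg
  set M : ℝ := 1 + |a| + |b| with hM_def
  have hM0 : 0 < M := by positivity
  have hfacts : ∀ x : ℝ, M < x → 1 ≤ x ∧ 1 ≤ x + a ∧ 1 ≤ x + b := by
    intro x hx
    rw [hM_def] at hx
    exact ⟨by linarith [abs_nonneg a, abs_nonneg b],
      by linarith [neg_abs_le a, abs_nonneg b],
      by linarith [neg_abs_le b, abs_nonneg a]⟩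
  -- continuity of the three integrands
  have hsa : Continuous fun x : ℝ => x + a := continuous_id.add continuous_const
  have hsb : Continuous fun x : ℝ => x + b := continuous_id.add continuous_const
  have hc1 : Continuous fun x : ℝ => x * deriv Ai (x + a) * Ai (x + b) :=
    (continuous_id.mul (hd_cont.comp hsa)).mul (hAi_cont.comp hsb)
  have hc2 : Continuous fun x : ℝ => x * Ai (x + a) * deriv Ai (x + b) :=
    (continuous_id.mul (hAi_cont.comp hsa)).mul (hd_cont.comp hsb)
  have hc3 : Continuous fun x : ℝ => Ai (x + a) * Ai (x + b) :=
    (hAi_cont.comp hsa).mul (hAi_cont.comp hsb)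
  -- the three integrabilities
  have h1 : IntegrableOn (fun x : ℝ => x * deriv Ai (x + a) * Ai (x + b)) (Ioi 0) := by
    apply aux_int _ M (K2 * (1 + |a|) * (K1 * (1 + |b|) ^ 2)) hM0 (by positivity) hc1
    intro x hx
    obtain ⟨hx1, hxa, hxb⟩ := hfacts x hx
    have hx0 : (0:ℝ) < x := by linarith
    rw [abs_mul, abs_mul, abs_of_pos hx0]
    calc x * |deriv Ai (x + a)| * |Ai (x + b)|
        ≤ x * (K2 * (1 + |a|) / x) * (K1 * (1 + |b|) ^ 2 / x ^ 2) := by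
          apply mul_le_mul (mul_le_mul_of_nonneg_left
            (shifted_decay_deriv x a hx1 hxa) (le_of_lt hx0))
            (shifted_decay_Ai x b hx1 hxb) (abs_nonneg _) (by positivity)
      _ = K2 * (1 + |a|) * (K1 * (1 + |b|) ^ 2) / x ^ 2 := by
          field_simp
  have h2 : IntegrableOn (fun x : ℝ => x * Ai (x + a) * deriv Ai (x + b)) (Ioi 0) := by
    apply aux_int _ M (K1 * (1 + |a|) ^ 2 * (K2 * (1 + |b|))) hM0 (by positivity) hc2
    intro x hx
    obtain ⟨hx1, hxa, hxb⟩ := hfacts x hx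
    have hx0 : (0:ℝ) < x := by linarith
    rw [abs_mul, abs_mul, abs_of_pos hx0]
    calc x * |Ai (x + a)| * |deriv Ai (x + b)|
        ≤ x * (K1 * (1 + |a|) ^ 2 / x ^ 2) * (K2 * (1 + |b|) / x) := by
          apply mul_le_mul (mul_le_mul_of_nonneg_left
            (shifted_decay_Ai x a hx1 hxa) (le_of_lt hx0))
            (shifted_decay_deriv x b hx1 hxb) (abs_nonneg _) (by positivity)
      _ = K1 * (1 + |a|) ^ 2 * (K2 * (1 + |b|)) / x ^ 2 := by
          field_simp
  have h3 : IntegrableOn (fun x : ℝ => Ai (x + a) * Ai (x + b)) (Ioi 0) := by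
    apply aux_int _ M (K1 * (1 + |a|) ^ 2 * (K1 * (1 + |b|) ^ 2)) hM0 (by positivity) hc3
    intro x hx
    obtain ⟨hx1, hxa, hxb⟩ := hfacts x hx
    rw [abs_mul]
    calc |Ai (x + a)| * |Ai (x + b)|
        ≤ (K1 * (1 + |a|) ^ 2 / x ^ 2) * (K1 * (1 + |b|) ^ 2) :=
          mul_le_mul (shifted_decay_Ai x a hx1 hxa) (shifted_decay_Ai' x b hxb)
            (abs_nonneg _) (by positivity)
      _ = K1 * (1 + |a|) ^ 2 * (K1 * (1 + |b|) ^ 2) / x ^ 2 := by ring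
  refine ⟨h1, h2, h3, ?_⟩
  -- the boundary function
  set f : ℝ → ℝ := fun x => x * Ai (x + a) * Ai (x + b) with hf_def
  have hfderiv : ∀ x : ℝ, HasDerivAt f
      (x * deriv Ai (x + a) * Ai (x + b) + x * Ai (x + a) * deriv Ai (x + b)
        + Ai (x + a) * Ai (x + b)) x := by
    intro x
    have hAa : HasDerivAt (fun y : ℝ => Ai (y + a)) (deriv Ai (x + a)) x := by
      have := ((Ai_differentiable (x + a)).hasDerivAt).comp x ((hasDerivAt_id x).add_const a)
      exact this.congr_deriv (mul_one _)
    have hAb : HasDerivAt (fun y : ℝ => Ai (y + b)) (deriv Ai (x + b)) x := by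
      have := ((Ai_differentiable (x + b)).hasDerivAt).comp x ((hasDerivAt_id x).add_const b)
      exact this.congr_deriv (mul_one _)
    have := ((hasDerivAt_id x).mul hAa).mul hAb
    simp only [id_eq, Pi.mul_apply] at this
    exact this.congr_deriv (by ring)
  have htend : Tendsto f atTop (𝓝 0) := by
    refine squeeze_zero_norm' (a := fun x => K1 * (1 + |a|) ^ 2 * (K1 * (1 + |b|) ^ 2) / x) ?_ ?_
    · filter_upwards [eventually_gt_atTop M] with x hx
      obtain ⟨hx1, hxa, hxb⟩ := hfacts x hx
      have hx0 : (0:ℝ) < x := by linarith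
      rw [Real.norm_eq_abs, hf_def]
      rw [abs_mul, abs_mul, abs_of_pos hx0]
      calc x * |Ai (x + a)| * |Ai (x + b)|
          ≤ x * (K1 * (1 + |a|) ^ 2 / x ^ 2) * (K1 * (1 + |b|) ^ 2) := by
            apply mul_le_mul (mul_le_mul_of_nonneg_left
              (shifted_decay_Ai x a hx1 hxa) (le_of_lt hx0))
              (shifted_decay_Ai' x b hxb) (abs_nonneg _) (by positivity)
        _ = K1 * (1 + |a|) ^ 2 * (K1 * (1 + |b|) ^ 2) / x := by
            field_simp
    · exact Tendsto.div_atTop tendsto_const_nhds tendsto_id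
  have hint : IntegrableOn (fun x : ℝ => x * deriv Ai (x + a) * Ai (x + b)
      + x * Ai (x + a) * deriv Ai (x + b) + Ai (x + a) * Ai (x + b)) (Ioi 0) :=
    (h1.add h2).add h3
  have hcf : Continuous f := (continuous_id.mul (hAi_cont.comp hsa)).mul (hAi_cont.comp hsb)
  have key := integral_Ioi_of_hasDerivAt_of_tendsto
    hcf.continuousWithinAt (fun x _ => hfderiv x) hint htend
  have hf0 : f 0 = 0 := by rw [hf_def]; ring
  rw [hf0, sub_zero] at key
  have e1 : (∫ x in Ioi (0:ℝ), (x * deriv Ai (x + a) * Ai (x + b)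
        + x * Ai (x + a) * deriv Ai (x + b) + Ai (x + a) * Ai (x + b)))
      = (∫ x in Ioi (0:ℝ), (x * deriv Ai (x + a) * Ai (x + b)
        + x * Ai (x + a) * deriv Ai (x + b))) + ∫ x in Ioi (0:ℝ), Ai (x + a) * Ai (x + b) :=
    integral_add (h1.add h2) h3
  have e2 : (∫ x in Ioi (0:ℝ), (x * deriv Ai (x + a) * Ai (x + b)
        + x * Ai (x + a) * deriv Ai (x + b)))
      = (∫ x in Ioi (0:ℝ), x * deriv Ai (x + a) * Ai (x + b))
        + ∫ x in Ioi (0:ℝ), x * Ai (x + a) * deriv Ai (x + b) :=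
    integral_add h1 h2
  linarith [key, e1, e2]
end
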